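/- arXiv:1309.7018 — 6 statements merged into one kernel-verified Lean document; each statement's English description precedes it below -/
import Mathlib

section
/- In the matrix setup below, the following identity of S×S matrices over F holds: I − φ(Q) = −D^{−1}·(I − P·Q·P)·J. -/
open scoped Classical

noncomputable section

/-- **The key matrix identity:** in the matrix setup, `I - φ(Q) = -D⁻¹·(I - P·Q·P)·J`. -/
theorem matrix_setup_identity
    {F : Type*} [Field F] (φ : F →+* F) {S : Type*} [Fintype S] [DecidableEq S]
    (T : Set S) (p : S → S) (hp : Function.Involutive p) (hpT : ∀ i ∈ T, p i = i)
    (P D J : Matrix S S F)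
    (hP : P = Matrix.of fun i j => if j = p i then 1 else 0)
    (hDdiag : ∀ i j, i ≠ j → D i j = 0)
    (hDunit : ∀ i, IsUnit (D i i))
    (hDT : ∀ i ∈ T, D i i = 1)
    (hDp : ∀ i, D (p i) (p i) = D i i)
    (hDphi : ∀ i, φ (D i i) = (D i i)⁻¹)
    (hJphi : ∀ i j, φ (J i j) = J i j)
    (hJT : ∀ i ∈ T, J i i = -1 ∧ ∀ j, j ≠ i → J i j = 0)
    (hJinv : J * (P * J * P) = 1)
    (D₀ J₀ Q : Matrix S S F)
    (hD₀ : D₀ = Matrix.of fun i j => if i = j ∧ i ∈ T then 0 else D i j)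
    (hJ₀ : J₀ = Matrix.of fun i j => if i = j ∧ i ∈ T then 0 else J i j)
    (hQ : Q = D₀ * J₀)
    :
    1 - Q.map φ = -(D⁻¹ * (1 - P * Q * P) * J) := by
  have hpT' : ∀ i, i ∉ T → p i ∉ T := by
    intro i hi hpi
    apply hi
    have : p (p i) = p i := hpT _ hpi
    rw [hp i] at this
    rw [this]; exact hpi
  -- multiplication by P picks out permuted rows/columns
  have hPl : ∀ (M : Matrix S S F) i j, (P * M) i j = M (p i) j := by
    intro M i j
    rw [Matrix.mul_apply]
    rw [Finset.sum_eq_single (p i)]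
    · simp [hP]
    · intro k _ hk
      simp [hP, hk]
    · intro h; exact absurd (Finset.mem_univ _) h
  have hPr : ∀ (M : Matrix S S F) i j, (M * P) i j = M i (p j) := by
    intro M i j
    rw [Matrix.mul_apply]
    rw [Finset.sum_eq_single (p j)]
    · simp [hP, hp j]
    · intro k _ hk
      have : j ≠ p k := by
        intro h; apply hk; rw [h, hp]
      simp [hP, this]
    · intro h; exact absurd (Finset.mem_univ _) h
  -- Q is "diagonal times J₀"
  have hQ' : ∀ i j, Q i j = D₀ i i * J₀ i j := by
    intro i j
    rw [hQ, Matrix.mul_apply, Finset.sum_eq_single i]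
    · intro k _ hk
      have : D₀ i k = 0 := by
        simp only [hD₀, Matrix.of_apply]
        rw [if_neg (fun hc => hk hc.1.symm), hDdiag i k (Ne.symm hk)]
      rw [this, zero_mul]
    · intro h; exact absurd (Finset.mem_univ _) h
  -- the inverse of D
  have hDeq : D = Matrix.diagonal (fun i => D i i) := by
    ext a b
    by_cases h : a = b
    · subst h; simp
    · simp [Matrix.diagonal_apply_ne _ h, hDdiag a b h]
  have hDinv : D⁻¹ = Matrix.diagonal (fun i => (D i i)⁻¹) := by
    apply Matrix.inv_eq_right_inv
    nth_rewrite 1 [hDeq]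
    rw [Matrix.diagonal_mul_diagonal]
    rw [show (fun i => D i i * (D i i)⁻¹) = fun _ => (1 : F) from
      funext fun i => mul_inv_cancel₀ (hDunit i).ne_zero, Matrix.diagonal_one]
  -- the entrywise form of hJinv
  have hJJ : ∀ a b, (∑ k, J a k * J (p k) (p b)) = if a = b then (1 : F) else 0 := by
    intro a b
    have := congrFun (congrFun hJinv a) b
    rw [Matrix.mul_apply] at this
    simp only [hPr, hPl] at this
    rw [this, Matrix.one_apply]
  -- key identity: P*Q*P*J = D₀
  have key : P * Q * P * J = D₀ := by
    ext i j
    rw [Matrix.mul_apply]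
    have h1 : ∀ k, (P * Q * P) i k = Q (p i) (p k) := by
      intro k; rw [hPr, hPl]
    by_cases hiT : i ∈ T
    · have hz : ∀ k, Q (p i) (p k) = 0 := by
        intro k
        rw [hQ' ]
        have : D₀ (p i) (p i) = 0 := by
          rw [hpT _ hiT]
          simp [hD₀, hiT]
        rw [this, zero_mul]
      have hD₀z : D₀ i j = 0 := by
        by_cases h : i = j
        · subst h; simp [hD₀, hiT]
        · simp only [hD₀, Matrix.of_apply]
          rw [if_neg (fun hc => h hc.1), hDdiag i j h]
      simp [h1, hz, hD₀z]
    · have hpiT : p i ∉ T := hpT' i hiT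
      have h2 : ∀ k, Q (p i) (p k) = D i i * J (p i) (p k) := by
        intro k
        rw [hQ']
        have e1 : D₀ (p i) (p i) = D i i := by
          simp only [hD₀, Matrix.of_apply]
          rw [if_neg (fun hc => hpiT hc.2), hDp]
        have e2 : J₀ (p i) (p k) = J (p i) (p k) := by
          simp only [hJ₀, Matrix.of_apply]
          rw [if_neg (fun hc => hpiT hc.2)]
        rw [e1, e2]
      have hsum : (∑ k, J (p i) (p k) * J k j) = if i = j then (1 : F) else 0 := by
        have e := Equiv.sum_comp (hp.toPerm p) (fun k => J (p i) (p k) * J k j)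
        rw [← e]
        have : ∀ k, J (p i) (p ((hp.toPerm p) k)) * J ((hp.toPerm p) k) j
            = J (p i) k * J (p k) (p (p j)) := by
          intro k
          simp [Function.Involutive.coe_toPerm, hp k, hp j]
        rw [Finset.sum_congr rfl (fun k _ => this k), hJJ]
        simp [hp.injective.eq_iff]
      calc (∑ k, (P * Q * P) i k * J k j)
          = ∑ k, D i i * (J (p i) (p k) * J k j) := by
            refine Finset.sum_congr rfl fun k _ => ?_
            rw [h1, h2, mul_assoc]
        _ = D i i * ∑ k, J (p i) (p k) * J k j := by rw [Finset.mul_sum]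
        _ = D₀ i j := by
            rw [hsum]
            by_cases h : i = j
            · subst h
              rw [if_pos rfl, mul_one]
              simp only [hD₀, Matrix.of_apply]
              rw [if_neg (fun hc => hiT hc.2)]
            · rw [if_neg h, mul_zero]
              simp only [hD₀, Matrix.of_apply]
              rw [if_neg (fun hc => h hc.1), hDdiag i j h]
  -- now assemble
  rw [hDinv, Matrix.mul_assoc, Matrix.sub_mul, Matrix.one_mul, key]
  ext i j
  simp only [Matrix.sub_apply, Matrix.one_apply, Matrix.map_apply, Matrix.neg_apply,
    Matrix.diagonal_mul]
  rw [hQ']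
  by_cases hiT : i ∈ T
  · have e0 : D₀ i i = 0 := by simp [hD₀, hiT]
    have e1 : D i i = 1 := hDT i hiT
    have hD₀z : D₀ i j = 0 := by
      by_cases h : i = j
      · subst h; simp [hD₀, hiT]
      · simp only [hD₀, Matrix.of_apply]
        rw [if_neg (fun hc => h hc.1), hDdiag i j h]
    rw [e0, e1, hD₀z, zero_mul, map_zero, sub_zero, sub_zero]
    by_cases h : i = j
    · subst h
      rw [if_pos rfl, (hJT i hiT).1]
      norm_num
    · rw [if_neg h, (hJT i hiT).2 j (Ne.symm h)]
      norm_num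
  · have e0 : D₀ i i = D i i := by
      simp only [hD₀, Matrix.of_apply]; rw [if_neg (by tauto)]
    have e1 : J₀ i j = J i j := by
      simp only [hJ₀, Matrix.of_apply]; rw [if_neg (by tauto)]
    have hmap : φ (D₀ i i * J₀ i j) = (D i i)⁻¹ * J i j := by
      rw [e0, e1, map_mul, hDphi, hJphi]
    rw [hmap]
    have hd : (D i i)⁻¹ * D i i = 1 := inv_mul_cancel₀ (hDunit i).ne_zero
    by_cases h : i = j
    · subst h
      have e2 : D₀ i i = D i i := e0
      rw [if_pos rfl, e2]
      rw [mul_sub, hd]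
      ring
    · rw [if_neg h]
      have e3 : D₀ i j = 0 := by
        simp only [hD₀, Matrix.of_apply]
        rw [if_neg (fun hc => h hc.1), hDdiag i j h]
      rw [e3]
      ring
end
end

section
/- In the matrix setup below, suppose in addition that I − Q is invertible over F. Then I − φ(Q) is invertible over F, and (I − φ(Q))^{−1} = −(P·J·P)·(I − P·Q·P)^{−1}·D. -/
open scoped Classical

noncomputable section

/-- In the matrix setup, if `I - Q` is invertible then so is `I - φ(Q)`, with inverse
`-(P·J·P)·(I - P·Q·P)⁻¹·D`. -/
theorem matrix_setup_inverse
    {F : Type*} [Field F] (φ : F →+* F) {S : Type*} [Fintype S] [DecidableEq S]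
    (T : Set S) (p : S → S) (hp : Function.Involutive p) (hpT : ∀ i ∈ T, p i = i)
    (P D J : Matrix S S F)
    (hP : P = Matrix.of fun i j => if j = p i then 1 else 0)
    (hDdiag : ∀ i j, i ≠ j → D i j = 0)
    (hDunit : ∀ i, IsUnit (D i i))
    (hDT : ∀ i ∈ T, D i i = 1)
    (hDp : ∀ i, D (p i) (p i) = D i i)
    (hDphi : ∀ i, φ (D i i) = (D i i)⁻¹)
    (hJphi : ∀ i j, φ (J i j) = J i j)
    (hJT : ∀ i ∈ T, J i i = -1 ∧ ∀ j, j ≠ i → J i j = 0)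
    (hJinv : J * (P * J * P) = 1)
    (D₀ J₀ Q : Matrix S S F)
    (hD₀ : D₀ = Matrix.of fun i j => if i = j ∧ i ∈ T then 0 else D i j)
    (hJ₀ : J₀ = Matrix.of fun i j => if i = j ∧ i ∈ T then 0 else J i j)
    (hQ : Q = D₀ * J₀)
    (hQinv : IsUnit (1 - Q)) :
    IsUnit (1 - Q.map φ) ∧
      (1 - Q.map φ)⁻¹ = -((P * J * P) * (1 - P * Q * P)⁻¹ * D) := by
  -- membership in T is preserved by p
  have hTp : ∀ i, p i ∈ T ↔ i ∈ T := by
    intro i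
    constructor
    · intro h
      have h2 := hpT _ h
      rw [hp i] at h2
      rwa [h2]
    · intro h
      rwa [hpT i h]
  have hDne : ∀ i, D i i ≠ 0 := fun i => (hDunit i).ne_zero
  set E : Matrix S S F := Matrix.of (fun i j => if i = j ∧ i ∈ T then (1:F) else 0) with hE
  set Dinv : Matrix S S F := Matrix.of (fun i j => if i = j then (D i i)⁻¹ else 0) with hDinv
  have hEapp : ∀ i j, E i j = if i = j ∧ i ∈ T then (1:F) else 0 := fun _ _ => rfl
  have hDinvapp : ∀ i j, Dinv i j = if i = j then (D i i)⁻¹ else 0 := fun _ _ => rfl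
  have hPapp : ∀ i j, P i j = if j = p i then (1:F) else 0 := fun i j => by rw [hP]; rfl
  have hD₀app : ∀ i j, D₀ i j = if i = j ∧ i ∈ T then 0 else D i j := fun i j => by
    rw [hD₀]; rfl
  have hJ₀app : ∀ i j, J₀ i j = if i = j ∧ i ∈ T then 0 else J i j := fun i j => by
    rw [hJ₀]; rfl
  -- products with diagonal-type matrices
  have hdiagmul : ∀ (M : Matrix S S F), (∀ a b, a ≠ b → M a b = 0) →
      ∀ (N : Matrix S S F) i j, (M * N) i j = M i i * N i j := by
    intro M hM N i j
    rw [Matrix.mul_apply]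
    apply Finset.sum_eq_single i
    · intro k _ hk
      rw [hM i k (Ne.symm hk), zero_mul]
    · intro h; exact absurd (Finset.mem_univ i) h
  have hmuldiag : ∀ (M : Matrix S S F), (∀ a b, a ≠ b → M a b = 0) →
      ∀ (N : Matrix S S F) i j, (N * M) i j = N i j * M j j := by
    intro M hM N i j
    rw [Matrix.mul_apply]
    apply Finset.sum_eq_single j
    · intro k _ hk
      rw [hM k j hk, mul_zero]
    · intro h; exact absurd (Finset.mem_univ j) h
  have hDinvdiag : ∀ a b, a ≠ b → Dinv a b = 0 := by
    intro a b hab; rw [hDinvapp, if_neg hab]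
  have hEdiag : ∀ a b, a ≠ b → E a b = 0 := by
    intro a b hab; rw [hEapp, if_neg (fun hc => hab hc.1)]
  have hD₀diag : ∀ a b, a ≠ b → D₀ a b = 0 := by
    intro a b hab
    rw [hD₀app, if_neg (fun h => hab h.1), hDdiag a b hab]
  -- P * P = 1
  have hPP : P * P = 1 := by
    ext i j
    simp only [Matrix.mul_apply, hPapp, ite_mul, one_mul, zero_mul]
    rw [Finset.sum_congr rfl (fun k _ => by
      rw [show (if k = p i then if j = p k then (1:F) else 0 else 0)
          = if k = p i then (if j = i then (1:F) else 0) else 0 from by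
        by_cases h : k = p i
        · subst h; rw [if_pos rfl, if_pos rfl, hp i]
        · rw [if_neg h, if_neg h]]),
      Finset.sum_ite_eq' Finset.univ (p i) (fun _ => if j = i then (1:F) else 0)]
    simp only [Finset.mem_univ, if_true, Matrix.one_apply]
    by_cases h : i = j
    · subst h; simp
    · have h2 : ¬ j = i := fun hc => h hc.symm
      simp [h, h2]
  -- P * Dinv = Dinv * P
  have hPDinv : P * Dinv = Dinv * P := by
    ext i j
    rw [hmuldiag Dinv hDinvdiag, hdiagmul Dinv hDinvdiag, hPapp, hDinvapp, hDinvapp,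
      if_pos rfl, if_pos rfl]
    by_cases h : j = p i
    · subst h; simp [hDp i]
    · simp [h]
  -- P * E = E
  have hPE : P * E = E := by
    ext i j
    rw [hmuldiag E hEdiag, hPapp]
    simp only [hEapp]
    by_cases hjT : j ∈ T
    · by_cases hij : i = j
      · subst hij; simp [hjT, hpT i hjT]
      · have h2 : ¬ j = p i := fun hh => hij (by
          have h3 := congrArg p hh
          rw [hp] at h3
          rw [← h3, hpT j hjT])
        simp [hij, h2]
    · have h3 : ¬(i = j ∧ i ∈ T) := fun hc => hjT (hc.1 ▸ hc.2)
      simp [hjT, h3]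
  -- E * P = E
  have hEP : E * P = E := by
    ext i j
    rw [hdiagmul E hEdiag, hPapp]
    simp only [hEapp]
    by_cases hiT : i ∈ T
    · by_cases hij : i = j
      · subst hij; simp [hiT, hpT i hiT]
      · have hji : ¬ j = i := fun hc => hij hc.symm
        simp [hiT, hij, hji, hpT i hiT]
    · simp [hiT]
  -- Dinv * E = E
  have hDinvE : Dinv * E = E := by
    ext i j
    rw [hdiagmul Dinv hDinvdiag, hDinvapp, if_pos rfl]
    simp only [hEapp]
    by_cases h : i = j ∧ i ∈ T
    · obtain ⟨hij, hiT⟩ := h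
      subst hij
      simp [hiT, hDT i hiT]
    · simp [h]
  -- Dinv * D = 1
  have hDinvD : Dinv * D = 1 := by
    ext i j
    rw [hdiagmul Dinv hDinvdiag, hDinvapp, if_pos rfl]
    by_cases h : i = j
    · subst h; rw [Matrix.one_apply_eq, inv_mul_cancel₀ (hDne i)]
    · rw [hDdiag i j h, mul_zero, Matrix.one_apply_ne h]
  -- E * J = -E
  have hEJ : E * J = -E := by
    ext i j
    rw [hdiagmul E hEdiag, Matrix.neg_apply]
    simp only [hEapp]
    by_cases h : i ∈ T
    · by_cases hij : i = j
      · subst hij; simp [h, (hJT i h).1]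
      · simp [h, hij, (hJT i h).2 j (fun hji => hij hji.symm)]
    · simp [h]
  -- Q = D*J + E
  have hQDJ : Q = D * J + E := by
    ext i j
    rw [hQ, hdiagmul D₀ hD₀diag, Matrix.add_apply, hdiagmul D hDdiag]
    simp only [hD₀app, hJ₀app, hEapp]
    by_cases h : i ∈ T
    · by_cases hij : i = j
      · subst hij; simp [h, hDT i h, (hJT i h).1]
      · simp [h, hij, (hJT i h).2 j (fun hji => hij hji.symm)]
    · simp [h]
  -- Q.map φ = Dinv*J + E
  have hQφ : Q.map φ = Dinv * J + E := by
    ext i j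
    rw [Matrix.map_apply, hQ, hdiagmul D₀ hD₀diag, Matrix.add_apply,
      hdiagmul Dinv hDinvdiag, map_mul, hDinvapp, if_pos rfl]
    simp only [hD₀app, hJ₀app, hEapp]
    by_cases h : i ∈ T
    · by_cases hij : i = j
      · subst hij; simp [h, hDT i h, (hJT i h).1]
      · simp [h, hij, (hJT i h).2 j (fun hji => hij hji.symm)]
    · simp [h, hDphi, hJphi]
  -- J * P * J = P
  have hJPJ : J * P * J = P := by
    have h1 : J * P * J * P = 1 := by
      calc J * P * J * P = J * (P * J * P) := by noncomm_ring
        _ = 1 := hJinv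
    calc J * P * J = J * P * J * (P * P) := by rw [hPP, mul_one]
      _ = (J * P * J * P) * P := by noncomm_ring
      _ = P := by rw [h1, one_mul]
  -- the key identity
  have hkey : (1 - Q.map φ) * (P * J) = -(P * Dinv * (1 - Q)) := by
    rw [hQφ, hQDJ]
    calc (1 - (Dinv * J + E)) * (P * J)
        = P * J - Dinv * (J * P * J) - (E * P) * J := by noncomm_ring
      _ = P * J - Dinv * P - E * J := by rw [hJPJ, hEP]
      _ = P * J - Dinv * P + E := by rw [hEJ]; noncomm_ring
      _ = P * J - P * Dinv + P * E := by rw [hPDinv, hPE]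
      _ = -(P * Dinv) + P * (Dinv * D) * J + P * (Dinv * E) := by
            rw [hDinvD, hDinvE]; noncomm_ring
      _ = -(P * Dinv * (1 - (D * J + E))) := by noncomm_ring
  -- invertibility of 1 - Q
  have hdet : IsUnit (1 - Q).det := (Matrix.isUnit_iff_isUnit_det _).mp hQinv
  have hinv1 : (1 - Q) * (1 - Q)⁻¹ = 1 := Matrix.mul_nonsing_inv _ hdet
  -- (1 - P*Q*P)⁻¹ = P * (1-Q)⁻¹ * P
  have h2 : (1 : Matrix S S F) - P * Q * P = P * (1 - Q) * P := by
    have h2' : P * (1 - Q) * P = P * P - P * Q * P := by noncomm_ring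
    rw [h2', hPP]
  have h3 : ((1 : Matrix S S F) - P * Q * P)⁻¹ = P * (1 - Q)⁻¹ * P := by
    apply Matrix.inv_eq_right_inv
    rw [h2]
    calc P * (1 - Q) * P * (P * (1 - Q)⁻¹ * P)
        = P * (1 - Q) * (P * P) * (1 - Q)⁻¹ * P := by noncomm_ring
      _ = P * ((1 - Q) * (1 - Q)⁻¹) * P := by rw [hPP]; noncomm_ring
      _ = P * P := by rw [hinv1, mul_one]
      _ = 1 := hPP
  -- the candidate inverse
  have hmain : (1 - Q.map φ) * (-((P * J * P) * (1 - P * Q * P)⁻¹ * D)) = 1 := by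
    rw [h3]
    calc (1 - Q.map φ) * (-((P * J * P) * (P * (1 - Q)⁻¹ * P) * D))
        = -((1 - Q.map φ) * (P * J) * ((P * P) * (1 - Q)⁻¹ * P * D)) := by noncomm_ring
      _ = -((1 - Q.map φ) * (P * J) * (1 * (1 - Q)⁻¹ * P * D)) := by rw [hPP]
      _ = -(-(P * Dinv * (1 - Q)) * (1 * (1 - Q)⁻¹ * P * D)) := by rw [hkey]
      _ = P * Dinv * ((1 - Q) * (1 - Q)⁻¹) * (P * D) := by noncomm_ring
      _ = P * Dinv * (P * D) := by rw [hinv1, mul_one]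
      _ = Dinv * (P * P) * D := by rw [hPDinv]; noncomm_ring
      _ = Dinv * D := by rw [hPP, mul_one]
      _ = 1 := hDinvD
  have hmain' : (-((P * J * P) * (1 - P * Q * P)⁻¹ * D)) * (1 - Q.map φ) = 1 :=
    mul_eq_one_comm.mp hmain
  exact ⟨⟨⟨1 - Q.map φ, _, hmain, hmain'⟩, rfl⟩, Matrix.inv_eq_right_inv hmain⟩
end
end

section
/- In the matrix setup below, suppose in addition that: I − Q is invertible over F; B is a 1×S row vector and E is an S×1 column vector each of whose entries is fixed by φ; D·E = E; P·E = E; and there is a scalar c ∈ F fixed by φ with B·P·J = c·B. Then B·(I − φ(Q))^{−1}·E = −c · B·(I − Q)^{−1}·E. (In the application, c = (−1)^{n−1}, giving B(I − φ(Q))^{−1}E = (−1)^n B(I − Q)^{−1}E.) -/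
open scoped Classical

noncomputable section

/-- **Reciprocity in the matrix setup:** with `I - Q` invertible, `B`, `E` vectors with
entries fixed by `φ`, `D·E = E`, `P·E = E`, and `B·P·J = c·B` for a scalar `c` fixed by
`φ`, one has `B·(I - φ(Q))⁻¹·E = -c·B·(I - Q)⁻¹·E`. -/
theorem matrix_setup_reciprocity
    {F : Type*} [Field F] (φ : F →+* F) {S : Type*} [Fintype S] [DecidableEq S]
    (T : Set S) (p : S → S) (hp : Function.Involutive p) (hpT : ∀ i ∈ T, p i = i)
    (P D J : Matrix S S F)
    (hP : P = Matrix.of fun i j => if j = p i then 1 else 0)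
    (hDdiag : ∀ i j, i ≠ j → D i j = 0)
    (hDunit : ∀ i, IsUnit (D i i))
    (hDT : ∀ i ∈ T, D i i = 1)
    (hDp : ∀ i, D (p i) (p i) = D i i)
    (hDphi : ∀ i, φ (D i i) = (D i i)⁻¹)
    (hJphi : ∀ i j, φ (J i j) = J i j)
    (hJT : ∀ i ∈ T, J i i = -1 ∧ ∀ j, j ≠ i → J i j = 0)
    (hJinv : J * (P * J * P) = 1)
    (D₀ J₀ Q : Matrix S S F)
    (hD₀ : D₀ = Matrix.of fun i j => if i = j ∧ i ∈ T then 0 else D i j)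
    (hJ₀ : J₀ = Matrix.of fun i j => if i = j ∧ i ∈ T then 0 else J i j)
    (hQ : Q = D₀ * J₀)
    (hQinv : IsUnit (1 - Q))
    (B : Matrix Unit S F) (E : Matrix S Unit F)
    (hBphi : ∀ j, φ (B () j) = B () j) (hEphi : ∀ i, φ (E i ()) = E i ())
    (hDE : D * E = E) (hPE : P * E = E)
    (c : F) (hc : φ c = c) (hBPJ : B * P * J = c • B) :
    (B * (1 - Q.map φ)⁻¹ * E) () () = -c * ((B * (1 - Q)⁻¹ * E) () ()) := by
  classical
  set d : S → F := fun i => D i i with hd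
  set d' : S → F := fun i => (D i i)⁻¹ with hd'
  set eT : S → F := fun i => if i ∈ T then (1:F) else 0 with heT
  -- p preserves T
  have hpT' : ∀ i, p i ∈ T ↔ i ∈ T := by
    intro i
    constructor
    · intro h
      have := hpT _ h
      rw [hp i] at this
      rwa [this]
    · intro h; rw [hpT i h]; exact h
  have hD' : D = Matrix.diagonal d := by
    ext i j
    by_cases h : i = j
    · subst h; simp [Matrix.diagonal_apply_eq, hd]
    · rw [Matrix.diagonal_apply_ne _ h]; exact hDdiag i j h
  have hPP : P * P = 1 := by
    subst hP
    ext i j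
    rw [Matrix.mul_apply]
    rw [Finset.sum_eq_single (p i)]
    · simp [Matrix.one_apply, hp i, eq_comm]
    · intro k _ hk; simp [Matrix.of_apply, hk]
    · simp
  have hPd : P * Matrix.diagonal d = Matrix.diagonal d * P := by
    ext i j
    rw [Matrix.mul_diagonal, Matrix.diagonal_mul]
    subst hP
    simp only [Matrix.of_apply]
    by_cases h : j = p i
    · subst h; simp [hd, hDp]
    · simp [h]
  have hPeT : P * Matrix.diagonal eT = Matrix.diagonal eT * P := by
    ext i j
    rw [Matrix.mul_diagonal, Matrix.diagonal_mul]
    subst hP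
    simp only [Matrix.of_apply]
    by_cases h : j = p i
    · subst h; simp [heT, hpT' i]
    · simp [h]
  have hETJ : Matrix.diagonal eT * J = -Matrix.diagonal eT := by
    ext i j
    rw [Matrix.diagonal_mul, Matrix.neg_apply]
    by_cases hiT : i ∈ T
    · obtain ⟨h1, h2⟩ := hJT i hiT
      by_cases h : i = j
      · subst h; simp [heT, hiT, h1]
      · rw [h2 j (Ne.symm h), Matrix.diagonal_apply_ne _ h]; simp [heT, hiT]
    · simp [heT, hiT, Matrix.diagonal_apply, hiT]
  have hD₀' : D₀ = Matrix.diagonal d - Matrix.diagonal eT := by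
    rw [hD₀]
    ext i j
    simp only [Matrix.of_apply, Matrix.sub_apply]
    by_cases h : i = j
    · subst h
      by_cases hiT : i ∈ T
      · simp [hiT, heT, hd, Matrix.diagonal_apply_eq, hDT i hiT]
      · simp [hiT, heT, hd, Matrix.diagonal_apply_eq]
    · simp only [Matrix.diagonal_apply_ne _ h, h, false_and, if_false, sub_zero]
      exact hDdiag i j h
  have hJ₀' : J₀ = J + Matrix.diagonal eT := by
    rw [hJ₀]
    ext i j
    simp only [Matrix.of_apply, Matrix.add_apply]
    by_cases h : i = j
    · subst h
      by_cases hiT : i ∈ T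
      · simp [hiT, heT, Matrix.diagonal_apply_eq, (hJT i hiT).1]
      · simp [hiT, heT, Matrix.diagonal_apply_eq]
    · simp [h, Matrix.diagonal_apply_ne _ h]
  have hdeT0 : Matrix.diagonal d * Matrix.diagonal eT - Matrix.diagonal eT * Matrix.diagonal eT = 0 := by
    rw [Matrix.diagonal_mul_diagonal, Matrix.diagonal_mul_diagonal]
    have : (fun i => d i * eT i) = fun i => eT i * eT i := by
      funext i
      by_cases hiT : i ∈ T
      · simp [heT, hiT, hd, hDT i hiT]
      · simp [heT, hiT]
    rw [this, sub_self]
  have hQ' : Q = Matrix.diagonal d * J + Matrix.diagonal eT := by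
    rw [hQ, hD₀', hJ₀']
    have expand : (Matrix.diagonal d - Matrix.diagonal eT) * (J + Matrix.diagonal eT)
        = Matrix.diagonal d * J - Matrix.diagonal eT * J
          + (Matrix.diagonal d * Matrix.diagonal eT - Matrix.diagonal eT * Matrix.diagonal eT) := by
      noncomm_ring
    rw [expand, hdeT0, add_zero, hETJ, sub_neg_eq_add]
  have hQφ : Q.map φ = Matrix.diagonal d' * J + Matrix.diagonal eT := by
    ext i j
    rw [Matrix.map_apply, hQ']
    simp only [Matrix.add_apply, Matrix.diagonal_mul, map_add, map_mul]
    rw [hDphi i, hJphi i j]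
    congr 1
    by_cases h : i = j
    · subst h
      simp only [Matrix.diagonal_apply_eq]
      by_cases hiT : i ∈ T <;> simp [heT, hiT]
    · simp [Matrix.diagonal_apply_ne _ h]
  have hdd : Matrix.diagonal d' * Matrix.diagonal d = 1 := by
    rw [Matrix.diagonal_mul_diagonal]
    have : (fun i => d' i * d i) = fun _ => (1:F) := by
      funext i
      exact inv_mul_cancel₀ (hDunit i).ne_zero
    rw [this, Matrix.diagonal_one]
  have hd'eT : Matrix.diagonal d' * Matrix.diagonal eT = Matrix.diagonal eT := by
    rw [Matrix.diagonal_mul_diagonal]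
    have heq : (fun i => d' i * eT i) = eT := by
      funext i
      by_cases hiT : i ∈ T
      · simp [heT, hiT, hd', hDT i hiT]
      · simp [heT, hiT]
    rw [heq]
  have hPJPJ : P * J * (P * J) = 1 := by
    have h1 : P * J * P * J = 1 := by
      have h0 := mul_eq_one_comm.mp hJinv
      simpa only [Matrix.mul_assoc] using h0
    simpa only [Matrix.mul_assoc] using h1
  -- the key identity
  have hKey : 1 - Q.map φ = -(Matrix.diagonal d' * P) * (1 - Q) * (P * J) := by
    have expand : -(Matrix.diagonal d' * P) * (1 - Q) * (P * J)
        = -(Matrix.diagonal d' * (P * P) * J)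
          + Matrix.diagonal d' * (P * Matrix.diagonal d) * (J * (P * (J))) *1
          + Matrix.diagonal d' * (P * Matrix.diagonal eT) * (P * J) := by
      rw [hQ']; noncomm_ring
    rw [expand, hPP, hPd, hPeT, Matrix.mul_one, Matrix.mul_one]
    have e2 : Matrix.diagonal d' * (Matrix.diagonal d * P) * (J * (P * J))
        = 1 := by
      have h2 : Matrix.diagonal d' * (Matrix.diagonal d * P) * (J * (P * J))
          = (Matrix.diagonal d' * Matrix.diagonal d) * (P * J * (P * J)) := by
        simp only [Matrix.mul_assoc]
      rw [h2, hdd, hPJPJ, one_mul]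
    have e3 : Matrix.diagonal d' * (Matrix.diagonal eT * P) * (P * J)
        = -Matrix.diagonal eT := by
      have h3 : Matrix.diagonal d' * (Matrix.diagonal eT * P) * (P * J)
          = (Matrix.diagonal d' * Matrix.diagonal eT) * ((P * P) * J) := by
        simp only [Matrix.mul_assoc]
      rw [h3, hd'eT, hPP, one_mul, hETJ]
    rw [e2, e3, hQφ]
    noncomm_ring
  have hdet : IsUnit (1 - Q).det := (Matrix.isUnit_iff_isUnit_det _).mp hQinv
  have h1 : (1 - Q) * (1 - Q)⁻¹ = 1 := Matrix.mul_nonsing_inv _ hdet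
  have hRight : (1 - Q.map φ) * (-(P * J * (1 - Q)⁻¹ * (P * Matrix.diagonal d))) = 1 := by
    rw [hKey]
    simp only [neg_mul, mul_neg, neg_neg, Matrix.mul_assoc]
    rw [show ∀ X : Matrix S S F, P * (J * (P * (J * X))) = X from fun X => by
      simp only [← Matrix.mul_assoc]; rw [show P*J*P*J = 1 by rw [Matrix.mul_assoc (P*J) P J]; exact hPJPJ, one_mul]]
    rw [show (1 - Q) * ((1 - Q)⁻¹ * (P * Matrix.diagonal d)) = P * Matrix.diagonal d by
      rw [← Matrix.mul_assoc, h1, one_mul]]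
    rw [show P * (P * Matrix.diagonal d) = Matrix.diagonal d by
      rw [← Matrix.mul_assoc, hPP, one_mul]]
    exact hdd
  have hinv : (1 - Q.map φ)⁻¹ = -(P * J * (1 - Q)⁻¹ * (P * Matrix.diagonal d)) :=
    Matrix.inv_eq_right_inv hRight
  rw [hinv]
  rw [show B * -(P * J * (1 - Q)⁻¹ * (P * Matrix.diagonal d)) * E
      = -(B * P * J * (1 - Q)⁻¹ * P * (Matrix.diagonal d * E)) by
    simp only [Matrix.mul_neg, Matrix.neg_mul, Matrix.mul_assoc]]
  rw [← hD', hDE, hBPJ]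
  rw [show c • B * (1 - Q)⁻¹ * P * E = c • B * (1 - Q)⁻¹ * (P * E) from Matrix.mul_assoc _ _ _, hPE]
  simp only [Matrix.smul_mul, Matrix.neg_apply, Matrix.smul_apply, smul_eq_mul, neg_mul]
end
end

section
/- Let M be a deterministic finite automaton over a finite alphabet A with finite state set, and for n ≥ 0 let a_n be the number of words of length n accepted by M. Then the generating function f = ∑_{n ≥ 0} a_n t^n ∈ ℚ⟦t⟧ is rational: there exist polynomials p, q ∈ ℚ[t] with q(0) ≠ 0 such that q·f = p in ℚ⟦t⟧. -/
open scoped Classical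

noncomputable section

set_option linter.unusedSectionVars false

namespace DFAGenAux

open Polynomial Matrix Finset

variable {A S : Type*} [Fintype A] [Fintype S] (M : DFA A S)

/-- number of words of length `n` leading from `t` to `s`. -/
def cnt (n : ℕ) (t s : S) : ℕ :=
  Nat.card {v : List.Vector A n // M.evalFrom t v.1 = s}

lemma cnt_zero (t s : S) : cnt M 0 t s = if t = s then 1 else 0 := by
  have hnil : ∀ v : List.Vector A 0, v.1 = [] :=
    fun v => List.eq_nil_of_length_eq_zero v.2
  split_ifs with h
  · subst h
    have : Unique {v : List.Vector A 0 // M.evalFrom t v.1 = t} := by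
      refine ⟨⟨⟨List.Vector.nil, by simp [List.Vector.nil]⟩⟩, ?_⟩
      rintro ⟨v, hv⟩
      exact Subtype.ext (Subtype.ext (hnil v))
    exact Nat.card_unique
  · have : IsEmpty {v : List.Vector A 0 // M.evalFrom t v.1 = s} := by
      refine ⟨fun v => h ?_⟩
      have := v.2
      rwa [hnil v.1, DFA.evalFrom_nil] at this
    exact Nat.card_of_isEmpty

def consEquiv (n : ℕ) (t s : S) :
    {v : List.Vector A (n+1) // M.evalFrom t v.1 = s} ≃
      Σ x : A, {w : List.Vector A n // M.evalFrom (M.step t x) w.1 = s} where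
  toFun v := ⟨v.1.head, v.1.tail, by
    have h := v.2
    have hct : v.1.1 = v.1.head :: v.1.tail.1 := by
      conv_lhs => rw [← v.1.cons_head_tail]
      rfl
    rw [hct] at h
    simpa [DFA.evalFrom] using h⟩
  invFun x := ⟨List.Vector.cons x.1 x.2.1, by
    have h := x.2.2
    rw [show (List.Vector.cons x.1 x.2.1).1 = x.1 :: x.2.1.1 from rfl]
    simpa [List.Vector.cons, DFA.evalFrom] using h⟩
  left_inv v := by
    apply Subtype.ext
    exact v.1.cons_head_tail
  right_inv x := by
    rcases x with ⟨x, ⟨w, hw2⟩, hw⟩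
    rfl

lemma cnt_succ (n : ℕ) (t s : S) :
    cnt M (n+1) t s = ∑ x : A, cnt M n (M.step t x) s := by
  rw [cnt, Nat.card_congr (consEquiv M n t s), Nat.card_eq_fintype_card,
    Fintype.card_sigma]
  exact Finset.sum_congr rfl fun x _ => (Nat.card_eq_fintype_card).symm

/-- transfer matrix. -/
def T : Matrix S S ℚ := fun t t' => (Nat.card {x : A // M.step t x = t'} : ℚ)

lemma cnt_eq_pow (n : ℕ) (t s : S) : ((cnt M n t s : ℚ)) = (T M ^ n) t s := by
  induction n generalizing t with
  | zero => simp [cnt_zero, Matrix.one_apply]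
  | succ n ih =>
    rw [pow_succ', Matrix.mul_apply, cnt_succ]
    push_cast
    rw [show (∑ x : A, ((cnt M n (M.step t x) s : ℚ))) =
        ∑ x : A, (T M ^ n) (M.step t x) s from Finset.sum_congr rfl fun x _ => ih _]
    rw [← Finset.sum_fiberwise univ (fun x : A => M.step t x)
      (fun x => (T M ^ n) (M.step t x) s)]
    refine Finset.sum_congr rfl fun t' _ => ?_
    have : ∀ x ∈ univ.filter (fun x : A => M.step t x = t'),
        (T M ^ n) (M.step t x) s = (T M ^ n) t' s := by
      intro x hx
      rw [(Finset.mem_filter.mp hx).2]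
    rw [Finset.sum_congr rfl this, Finset.sum_const, nsmul_eq_mul]
    congr 1
    rw [T, Nat.card_eq_fintype_card, Fintype.card_subtype]

def acceptsEquiv (n : ℕ) :
    {u : List A // u ∈ M.accepts ∧ u.length = n} ≃
      {v : List.Vector A n // M.eval v.1 ∈ M.accept} where
  toFun u := ⟨⟨u.1, u.2.2⟩, (DFA.mem_accepts M).mp u.2.1⟩
  invFun v := ⟨v.1.1, (DFA.mem_accepts M).mpr v.2, v.1.2⟩
  left_inv u := rfl
  right_inv v := rfl

lemma a_eq (n : ℕ) :
    (Nat.card {u : List A // u ∈ M.accepts ∧ u.length = n} : ℚ) =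
      ∑ s : S, (if s ∈ M.accept then (1:ℚ) else 0) * (T M ^ n) M.start s := by
  rw [Nat.card_congr (acceptsEquiv M n), Nat.card_eq_fintype_card,
    Fintype.card_subtype]
  rw [Finset.card_filter]
  push_cast
  rw [← Finset.sum_fiberwise univ (fun v : List.Vector A n => M.eval v.1)
    (fun v => if M.eval v.1 ∈ M.accept then (1:ℚ) else 0)]
  refine Finset.sum_congr rfl fun s _ => ?_
  have : ∀ v ∈ univ.filter (fun v : List.Vector A n => M.eval v.1 = s),
      (if M.eval v.1 ∈ M.accept then (1:ℚ) else 0)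
        = (if s ∈ M.accept then (1:ℚ) else 0) := by
    intro v hv
    rw [(Finset.mem_filter.mp hv).2]
  rw [Finset.sum_congr rfl this, Finset.sum_const, nsmul_eq_mul]
  rw [mul_comm]
  congr 1
  rw [← cnt_eq_pow]
  congr 1
  rw [cnt, Nat.card_eq_fintype_card, Fintype.card_subtype]
  rfl

/-- the linear recurrence satisfied by the coefficients. -/
lemma key_recurrence (n : ℕ) :
    ∑ i ∈ Finset.range (Fintype.card S + 1),
      (T M).charpoly.coeff i *
        (∑ s : S, (if s ∈ M.accept then (1:ℚ) else 0) * (T M ^ (n + i)) M.start s) = 0 := by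
  set d := Fintype.card S
  have hCH : ∑ i ∈ Finset.range (d + 1), (T M).charpoly.coeff i • (T M) ^ i = 0 := by
    have h := Matrix.aeval_self_charpoly (T M)
    rwa [Polynomial.aeval_eq_sum_range, Matrix.charpoly_natDegree_eq_dim] at h
  have hCHn : ∑ i ∈ Finset.range (d + 1),
      (T M).charpoly.coeff i • (T M) ^ (n + i) = 0 := by
    calc ∑ i ∈ Finset.range (d + 1), (T M).charpoly.coeff i • (T M) ^ (n + i)
        = (T M) ^ n * ∑ i ∈ Finset.range (d + 1), (T M).charpoly.coeff i • (T M) ^ i := by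
          rw [Finset.mul_sum]
          exact Finset.sum_congr rfl fun i _ => by
            rw [mul_smul_comm, pow_add]
      _ = 0 := by rw [hCH, mul_zero]
  simp only [Finset.mul_sum]
  rw [Finset.sum_comm]
  calc ∑ s : S, ∑ i ∈ Finset.range (d + 1),
      (T M).charpoly.coeff i *
        ((if s ∈ M.accept then (1:ℚ) else 0) * (T M ^ (n + i)) M.start s)
      = ∑ s : S, (if s ∈ M.accept then (1:ℚ) else 0) *
            ((∑ i ∈ Finset.range (d + 1),
              (T M).charpoly.coeff i • (T M) ^ (n + i)) M.start s) := by
        refine Finset.sum_congr rfl fun s _ => ?_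
        rw [Matrix.sum_apply, Finset.mul_sum]
        refine Finset.sum_congr rfl fun i _ => ?_
        rw [Matrix.smul_apply, smul_eq_mul]
        ring
    _ = 0 := by
        rw [hCHn]
        simp

theorem main (M : DFA A S) :
    ∃ p q : Polynomial ℚ, q.coeff 0 ≠ 0 ∧
      (q : PowerSeries ℚ) *
        PowerSeries.mk (fun n => (Nat.card {u : List A // u ∈ M.accepts ∧ u.length = n} : ℚ))
        = (p : PowerSeries ℚ) := by
  set d := Fintype.card S with hd
  set χ := (T M).charpoly with hχ
  have hχdeg : χ.natDegree = d := Matrix.charpoly_natDegree_eq_dim (T M)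
  have hχmonic : χ.Monic := Matrix.charpoly_monic (T M)
  set a : ℕ → ℚ :=
    fun n => (Nat.card {u : List A // u ∈ M.accepts ∧ u.length = n} : ℚ) with ha
  set F := PowerSeries.mk a with hF
  set q := χ.reverse with hq
  have hq0 : q.coeff 0 = 1 := by
    rw [hq, Polynomial.coeff_reverse, Polynomial.revAt_le (Nat.zero_le _)]
    simpa [hχdeg] using hχmonic.coeff_natDegree
  have hqhigh : ∀ j, d < j → q.coeff j = 0 := by
    intro j hj
    have : q.natDegree < j := lt_of_le_of_lt
      (le_trans (Polynomial.reverse_natDegree_le χ) (le_of_eq hχdeg)) hj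
    exact Polynomial.coeff_eq_zero_of_natDegree_lt this
  have hqcoeff : ∀ j, j ≤ d → q.coeff j = χ.coeff (d - j) := by
    intro j hj
    rw [hq, Polynomial.coeff_reverse, hχdeg, Polynomial.revAt_le hj]
  -- coefficients of q * F vanish from degree d on
  have hvanish : ∀ m, d ≤ m → (PowerSeries.coeff m) ((q : PowerSeries ℚ) * F) = 0 := by
    intro m hm
    rw [PowerSeries.coeff_mul, Finset.Nat.sum_antidiagonal_eq_sum_range_succ_mk]
    have h1 : ∑ j ∈ Finset.range (m + 1),
        (PowerSeries.coeff j) (q : PowerSeries ℚ) * (PowerSeries.coeff (m - j)) F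
        = ∑ j ∈ Finset.range (d + 1), q.coeff j * a (m - j) := by
      rw [eq_comm]
      refine Finset.sum_subset (Finset.range_subset_range.mpr (by omega : d + 1 ≤ m + 1)) ?_ |>.trans ?_
      · intro j hj hnj
        have : d < j := by
          simp only [Finset.mem_range] at hj hnj; omega
        simp [Polynomial.coeff_coe, hqhigh j this]
      · refine Finset.sum_congr rfl fun j _ => ?_
        rw [Polynomial.coeff_coe, PowerSeries.coeff_mk]
    rw [h1]
    have h2 : ∑ j ∈ Finset.range (d + 1), q.coeff j * a (m - j)
        = ∑ i ∈ Finset.range (d + 1), χ.coeff i * a ((m - d) + i) := by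
      rw [← Finset.sum_range_reflect]
      refine Finset.sum_congr rfl fun j hj => ?_
      have hjd : j ≤ d := by simp only [Finset.mem_range] at hj; omega
      rw [hqcoeff _ (by omega : d + 1 - 1 - j ≤ d)]
      congr 2
      · omega
      · omega
    rw [h2]
    have h3 := key_recurrence M (m - d)
    calc ∑ i ∈ Finset.range (d + 1), χ.coeff i * a ((m - d) + i)
        = ∑ i ∈ Finset.range (d + 1), χ.coeff i *
            (∑ s : S, (if s ∈ M.accept then (1:ℚ) else 0) *
              (T M ^ ((m - d) + i)) M.start s) := by
          refine Finset.sum_congr rfl fun i _ => ?_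
          congr 1
          exact a_eq M _
      _ = 0 := h3
  refine ⟨((q : PowerSeries ℚ) * F).trunc d, q, by rw [hq0]; norm_num, ?_⟩
  ext m
  rw [Polynomial.coeff_coe, PowerSeries.coeff_trunc]
  split_ifs with h
  · rfl
  · exact hvanish m (by omega)

end DFAGenAux

/-- **Rationality of the counting generating function of a regular language.** For a DFA
`M` with finite alphabet and finite state set, the generating function
`f = ∑_n a_n tⁿ`, where `a_n` is the number of accepted words of length `n`, is rational:
`q·f = p` for some polynomials `p, q` with `q(0) ≠ 0`. -/
theorem dfa_generating_function_rational {A S : Type*} [Fintype A] [Fintype S]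
    (M : DFA A S) :
    ∃ p q : Polynomial ℚ, q.coeff 0 ≠ 0 ∧
      (q : PowerSeries ℚ) *
        PowerSeries.mk (fun n => (Nat.card {u : List A // u ∈ M.accepts ∧ u.length = n} : ℚ))
        = (p : PowerSeries ℚ) := by
  exact DFAGenAux.main M
end
end

section
/- Let M be a deterministic finite automaton over a finite alphabet A with finite state set, let I be a finite set, and let w : A → ℕ^I be a weight function with w(a) ≠ 0 for every a ∈ A. For a word u = a₁⋯a_k define its weight w(u) = w(a₁)+⋯+w(a_k) ∈ ℕ^I. Then for each m ∈ ℕ^I there are only finitely many accepted words of weight m, and the multivariate generating function F = ∑_{u accepted by M} ∏_{i ∈ I} t_i^{w(u)_i} ∈ ℚ⟦t_i : i ∈ I⟧ is rational: there exist polynomials P, Q ∈ ℚ[t_i : i ∈ I] with Q having nonzero constant term such that Q·F = P in ℚ⟦t_i : i ∈ I⟧. -/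
open scoped Classical
open Matrix

noncomputable section

/-- The multivariate weight generating function `F = ∑_{u accepted} ∏_i t_i^{w(u)_i}` of a
DFA `M` with weight function `w` on letters, extended additively to words: the coefficient
of the monomial `m` is the number of accepted words of weight `m`. -/
def dfaWeightSeries {A S : Type*} (M : DFA A S) {I : Type*} (w : A → I →₀ ℕ) :
    MvPowerSeries I ℚ :=
  fun m => (Nat.card {u : List A // u ∈ M.accepts ∧ (u.map w).sum = m} : ℚ)

section Aux

variable {A S : Type*} [Fintype A] [Fintype S] (M : DFA A S) {I : Type*} [Fintype I]
  (w : A → I →₀ ℕ)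

/-- The generating series of words accepted from state `s`. -/
def dfaF (s : S) : MvPowerSeries I ℚ :=
  fun m => (Nat.card {u : List A // M.evalFrom s u ∈ M.accept ∧ (u.map w).sum = m} : ℚ)

lemma length_le_of_weight (hw : ∀ a, w a ≠ 0) (u : List A) :
    u.length ≤ ((u.map w).sum).sum fun _ n => n := by
  induction u with
  | nil => simp
  | cons a v ih =>
    simp only [List.map_cons, List.sum_cons, List.length_cons]
    rw [Finsupp.sum_add_index' (fun _ => rfl) (fun _ _ _ => rfl)]
    have h1 : 1 ≤ (w a).sum fun _ n => n := by
      rcases Finsupp.support_nonempty_iff.2 (hw a) with ⟨i, hi⟩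
      have : 0 < (w a).sum fun _ n => n :=
        Finset.sum_pos' (fun _ _ => Nat.zero_le _)
          ⟨i, hi, Nat.pos_of_ne_zero (Finsupp.mem_support_iff.1 hi)⟩
      omega
    omega

lemma dfaF_finite (hw : ∀ a, w a ≠ 0) (s : S) (m : I →₀ ℕ) :
    {u : List A | M.evalFrom s u ∈ M.accept ∧ (u.map w).sum = m}.Finite := by
  apply (List.finite_length_le (α := A) (m.sum fun _ n => n)).subset
  rintro u ⟨-, hu⟩
  simpa [hu] using length_le_of_weight w hw u

/-- The finite set of words of weight `m` accepted from state `s`. -/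
def dfaG (hw : ∀ a, w a ≠ 0) (s : S) (m : I →₀ ℕ) : Finset (List A) :=
  (dfaF_finite M w hw s m).toFinset

lemma mem_dfaG (hw : ∀ a, w a ≠ 0) (s : S) (m : I →₀ ℕ) (u : List A) :
    u ∈ dfaG M w hw s m ↔ M.evalFrom s u ∈ M.accept ∧ (u.map w).sum = m := by
  simp [dfaG]

lemma coeff_dfaF (hw : ∀ a, w a ≠ 0) (s : S) (m : I →₀ ℕ) :
    MvPowerSeries.coeff m (dfaF M w s) = ((dfaG M w hw s m).card : ℚ) := by
  have : MvPowerSeries.coeff m (dfaF M w s) =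
      (Nat.card {u : List A // M.evalFrom s u ∈ M.accept ∧ (u.map w).sum = m} : ℚ) := rfl
  rw [this]
  congr 1
  show Nat.card ↥{u : List A | M.evalFrom s u ∈ M.accept ∧ (u.map w).sum = m} = _
  rw [Nat.card_coe_set_eq, Set.ncard_eq_toFinset_card _ (dfaF_finite M w hw s m)]
  rfl

lemma card_dfaG_rec (hw : ∀ a, w a ≠ 0) (s : S) (m : I →₀ ℕ) :
    ((dfaG M w hw s m).card : ℚ) =
      (if s ∈ M.accept ∧ m = 0 then 1 else 0) +
      ∑ a : A, if w a ≤ m then ((dfaG M w hw (M.step s a) (m - w a)).card : ℚ) else 0 := by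
  rcases eq_or_ne m 0 with rfl | hm
  · have hG : dfaG M w hw s 0 = if s ∈ M.accept then {([] : List A)} else ∅ := by
      ext u
      rw [mem_dfaG]
      have hnil : ∀ hu : (u.map w).sum = 0, u = [] := by
        intro hu
        have := length_le_of_weight w hw u
        rw [hu] at this
        simpa using List.length_eq_zero_iff.1 (by simpa using this)
      constructor
      · rintro ⟨h1, h2⟩
        rw [hnil h2] at h1 ⊢
        have h1' : s ∈ M.accept := by simpa [DFA.evalFrom] using h1
        simp [h1']
      · intro hu
        by_cases hs : s ∈ M.accept
        · rw [if_pos hs] at hu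
          simp only [Finset.mem_singleton] at hu
          subst hu
          exact ⟨by simpa [DFA.evalFrom] using hs, by simp⟩
        · rw [if_neg hs] at hu
          simp at hu
    have hsum : ∀ a : A, ¬ w a ≤ (0 : I →₀ ℕ) := by
      intro a h
      exact hw a (le_antisymm h zero_le)
    rw [hG]
    simp only [hsum, if_false, Finset.sum_const_zero, add_zero]
    by_cases hs : s ∈ M.accept <;> simp [hs]
  · have hG : dfaG M w hw s m = Finset.univ.biUnion (fun a : A =>
        if w a ≤ m then (dfaG M w hw (M.step s a) (m - w a)).image (a :: ·) else ∅) := by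
      ext u
      simp only [Finset.mem_biUnion, Finset.mem_univ, true_and]
      constructor
      · intro hu
        rw [mem_dfaG] at hu
        obtain ⟨h1, h2⟩ := hu
        match u with
        | [] => exact absurd (by simpa using h2.symm) hm
        | a :: v =>
          refine ⟨a, ?_⟩
          simp only [List.map_cons, List.sum_cons] at h2
          have hle : w a ≤ m := h2 ▸ le_add_right le_rfl
          have hv : (v.map w).sum = m - w a := by
            rw [← h2, add_tsub_cancel_left]
          rw [if_pos hle]
          refine Finset.mem_image.2 ⟨v, ?_, rfl⟩
          rw [mem_dfaG]
          refine ⟨?_, hv⟩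
          simpa [DFA.evalFrom] using h1
      · rintro ⟨a, hu⟩
        by_cases hle : w a ≤ m
        · rw [if_pos hle] at hu
          obtain ⟨v, hv, rfl⟩ := Finset.mem_image.1 hu
          rw [mem_dfaG] at hv ⊢
          refine ⟨by simpa [DFA.evalFrom] using hv.1, ?_⟩
          simp only [List.map_cons, List.sum_cons, hv.2]
          rw [add_tsub_cancel_of_le hle]
        · rw [if_neg hle] at hu
          simp at hu
    rw [hG, Finset.card_biUnion]
    · rw [if_neg (by simp [hm]), zero_add, Nat.cast_sum]
      refine Finset.sum_congr rfl fun a _ => ?_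
      by_cases hle : w a ≤ m
      · rw [if_pos hle, if_pos hle, Finset.card_image_of_injective _ (List.cons_injective)]
      · rw [if_neg hle, if_neg hle, Finset.card_empty, Nat.cast_zero]
    · intro a _ b _ hab
      simp only [Finset.disjoint_left]
      intro u hua hub
      by_cases ha : w a ≤ m
      · by_cases hb : w b ≤ m
        · rw [if_pos ha] at hua; rw [if_pos hb] at hub
          obtain ⟨v, -, rfl⟩ := Finset.mem_image.1 hua
          obtain ⟨v', -, h⟩ := Finset.mem_image.1 hub
          exact hab (List.cons_eq_cons.mp h.symm).1
        · rw [if_neg hb] at hub; simp at hub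
      · rw [if_neg ha] at hua; simp at hua

lemma dfaF_rec (hw : ∀ a, w a ≠ 0) (s : S) :
    dfaF M w s = (if s ∈ M.accept then 1 else 0) +
      ∑ a : A, MvPowerSeries.monomial (w a) 1 * dfaF M w (M.step s a) := by
  ext1 m
  show MvPowerSeries.coeff m _ = MvPowerSeries.coeff m _
  rw [map_add, map_sum, coeff_dfaF M w hw, card_dfaG_rec M w hw]
  congr 1
  · by_cases hs : s ∈ M.accept
    · simp only [hs, true_and, if_true, MvPowerSeries.coeff_one]
    · simp [hs]
  · refine Finset.sum_congr rfl fun a _ => ?_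
    rw [MvPowerSeries.coeff_monomial_mul]
    by_cases hle : w a ≤ m
    · rw [if_pos hle, if_pos hle, one_mul, coeff_dfaF M w hw]
    · rw [if_neg hle, if_neg hle]

end Aux

/-- **Rationality of the multivariate weight generating function of a regular language.**
Let `M` be a DFA with finite alphabet `A` and finite state set, `I` a finite set, and
`w : A → ℕ^I` a weight function with `w a ≠ 0` for all `a`, extended to words by
`w(a₁⋯a_k) = w a₁ + ⋯ + w a_k`. Then each weight is attained by only finitely many
accepted words, and the multivariate generating function
`F = ∑_{u accepted} ∏_i t_i^{w(u)_i}` is rational: `Q·F = P` with `P, Q` multivariate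
polynomials, `Q` with nonzero constant term. -/
theorem dfa_weighted_generating_function_rational {A S : Type*} [Fintype A] [Fintype S]
    (M : DFA A S) {I : Type*} [Fintype I] (w : A → I →₀ ℕ) (hw : ∀ a, w a ≠ 0) :
    (∀ m : I →₀ ℕ, {u : List A | u ∈ M.accepts ∧ (u.map w).sum = m}.Finite) ∧
    ∃ P Q : MvPolynomial I ℚ, MvPolynomial.constantCoeff Q ≠ 0 ∧
      (Q : MvPowerSeries I ℚ) * dfaWeightSeries M w = (P : MvPowerSeries I ℚ) := by
  have hws : dfaWeightSeries M w = dfaF M w M.start := rfl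
  constructor
  · intro m
    exact dfaF_finite M w hw M.start m
  · -- transfer matrix
    set T : Matrix S S (MvPolynomial I ℚ) := fun s s' =>
      ∑ a : A, if M.step s a = s' then MvPolynomial.monomial (w a) 1 else 0 with hT
    set e : S → MvPolynomial I ℚ := fun s => if s ∈ M.accept then 1 else 0 with he
    set φ : MvPolynomial I ℚ →+* MvPowerSeries I ℚ := MvPolynomial.coeToMvPowerSeries.ringHom
      with hφ
    set N : Matrix S S (MvPowerSeries I ℚ) := φ.mapMatrix (1 - T) with hN
    have hvec : N *ᵥ (dfaF M w) = fun s => φ (e s) := by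
      funext s
      have hTφ : ∀ s' : S, φ (T s s') =
          ∑ a : A, if M.step s a = s' then
            (MvPowerSeries.monomial (w a) 1 : MvPowerSeries I ℚ) else 0 := by
        intro s'
        rw [hT]
        simp only [map_sum]
        refine Finset.sum_congr rfl fun a _ => ?_
        split_ifs
        · exact MvPolynomial.coe_monomial _ _
        · exact map_zero φ
      have h1 : (N *ᵥ dfaF M w) s
          = ∑ s' : S, ((1 : Matrix S S (MvPowerSeries I ℚ)) s s' - φ (T s s'))
              * dfaF M w s' := by
        simp [hN, Matrix.mulVec, dotProduct, Matrix.sub_apply, map_sub,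
          Matrix.one_apply, apply_ite φ]
      rw [h1]
      simp only [sub_mul, Finset.sum_sub_distrib]
      have h2 : ∑ s' : S, (1 : Matrix S S (MvPowerSeries I ℚ)) s s' * dfaF M w s'
          = dfaF M w s := by
        rw [Finset.sum_eq_single s]
        · simp [Matrix.one_apply]
        · intro s' _ hs'
          simp [Matrix.one_apply, Ne.symm hs']
        · simp
      have h3 : ∑ s' : S, φ (T s s') * dfaF M w s'
          = ∑ a : A, MvPowerSeries.monomial (w a) 1 * dfaF M w (M.step s a) := by
        simp only [hTφ, Finset.sum_mul, ite_mul, zero_mul]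
        rw [Finset.sum_comm]
        refine Finset.sum_congr rfl fun a _ => ?_
        rw [Finset.sum_ite_eq]
        simp
      rw [h2, h3, dfaF_rec M w hw s]
      have h4 : φ (e s) = (if s ∈ M.accept then 1 else 0 : MvPowerSeries I ℚ) := by
        by_cases hs : s ∈ M.accept <;> simp [he, hs]
      rw [h4]; ring
    refine ⟨∑ s' : S, (1 - T).adjugate M.start s' * e s', (1 - T).det, ?_, ?_⟩
    · have hdet : MvPolynomial.constantCoeff ((1 - T).det)
          = ((MvPolynomial.constantCoeff (R := ℚ) (σ := I)).mapMatrix (1 - T)).det :=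
        RingHom.map_det _ _
      have hT0 : ∀ s s' : S, MvPolynomial.constantCoeff (T s s') = 0 := by
        intro s s'
        rw [hT]
        simp only [map_sum, apply_ite MvPolynomial.constantCoeff, map_zero,
          MvPolynomial.constantCoeff_monomial]
        simp [hw]
      have hone : (MvPolynomial.constantCoeff (R := ℚ) (σ := I)).mapMatrix (1 - T)
          = (1 : Matrix S S ℚ) := by
        ext s s'
        simp [Matrix.one_apply, hT0, apply_ite MvPolynomial.constantCoeff, Matrix.sub_apply]
      rw [hdet, hone, Matrix.det_one]
      exact one_ne_zero
    · have hsmul : N.det • dfaF M w = N.adjugate *ᵥ (fun s => φ (e s)) := by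
        rw [← hvec, Matrix.mulVec_mulVec, Matrix.adjugate_mul, Matrix.smul_mulVec,
          Matrix.one_mulVec]
      have key := congrFun hsmul M.start
      simp only [Pi.smul_apply, smul_eq_mul, Matrix.mulVec, dotProduct] at key
      have hdet : ((((1 - T).det : MvPolynomial I ℚ)) : MvPowerSeries I ℚ) = N.det := by
        rw [← MvPolynomial.coeToMvPowerSeries.ringHom_apply, ← hφ, RingHom.map_det, hN]
      have hadj : ∀ s' : S, (((1 - T).adjugate M.start s' : MvPolynomial I ℚ) :
          MvPowerSeries I ℚ) = N.adjugate M.start s' := by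
        intro s'
        rw [← MvPolynomial.coeToMvPowerSeries.ringHom_apply, ← hφ, hN,
          ← RingHom.map_adjugate]
        rfl
      rw [hws, hdet, key]
      rw [← MvPolynomial.coeToMvPowerSeries.ringHom_apply, ← hφ, map_sum]
      refine Finset.sum_congr rfl fun s' _ => ?_
      rw [_root_.map_mul, ← hadj, ← MvPolynomial.coeToMvPowerSeries.ringHom_apply, hφ]
end
end

section
/- Let Γ be a finite simple graph with vertex set S, and for a nonempty clique σ of Γ let g(σ) ∈ W(Γ) denote the product of the (pairwise commuting) generators in σ. Then every element w ∈ W(Γ) admits a unique factorization w = g(σ₁)·g(σ₂)⋯g(σ_k) (k ≥ 0) into nonempty cliques σ₁,…,σ_k of Γ with the property that for every 1 ≤ i < k, every vertex s ∈ σ_{i+1} satisfies that σ_i ∪ {s} is not a clique of Γ. Moreover, for this factorization ℓ(w) = |σ₁| + |σ₂| + ⋯ + |σ_k|. -/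
open scoped Classical

noncomputable section

/-- The Coxeter matrix of the right-angled Coxeter group `W(Γ)` of a simple graph `Γ`:
`M s s = 1`, `M s t = 2` if `s,t` adjacent, `M s t = 0` (representing `∞`) otherwise. -/
def racgMatrix {S : Type*} (Γ : SimpleGraph S) : CoxeterMatrix S where
  M := fun i j => if i = j then 1 else if Γ.Adj i j then 2 else 0
  isSymm := Matrix.IsSymm.ext fun i j => by
    rcases eq_or_ne i j with rfl | h
    · rfl
    · simp [h, h.symm, Γ.adj_comm]
  diagonal := fun i => by simp
  off_diagonal := fun i j h => by simp only [if_neg h]; split_ifs <;> simp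

/-- The right-angled Coxeter group of a simple graph. -/
abbrev RACG {S : Type*} (Γ : SimpleGraph S) := (racgMatrix Γ).Group

/-- The canonical Coxeter system on `W(Γ)`. -/
def racgCS {S : Type*} (Γ : SimpleGraph S) : CoxeterSystem (racgMatrix Γ) (RACG Γ) :=
  (racgMatrix Γ).toCoxeterSystem

/-- The growth series of `W(Γ)`: the coefficient of `t^n` is the number of elements
of word length `n`. -/
def racgGrowthSeries {S : Type*} (Γ : SimpleGraph S) : PowerSeries ℚ :=
  PowerSeries.mk fun n => (Nat.card {w : RACG Γ // (racgCS Γ).length w = n} : ℚ)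

/-- The clique complex of a finite simple graph, as the finite set of its cliques
(including the empty clique). -/
def cliqueComplex {S : Type*} [Fintype S] [DecidableEq S] (Γ : SimpleGraph S) :
    Finset (Finset S) :=
  Finset.univ.filter fun σ => Γ.IsClique (σ : Set S)

/-- The reduced Euler characteristic `χ̄(K) = -∑_{σ ∈ K} (-1)^{|σ|}` of a finite abstract
simplicial complex (the empty face is included in the sum). -/
def rEuler {V : Type*} (K : Finset (Finset V)) : ℤ :=
  -∑ σ ∈ K, (-1 : ℤ) ^ σ.card

/-- The link of a face `σ` in `K`. -/
def simplicialLink {V : Type*} [DecidableEq V] (K : Finset (Finset V)) (σ : Finset V) :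
    Finset (Finset V) :=
  K.filter fun τ => τ ∩ σ = ∅ ∧ τ ∪ σ ∈ K

/-- `K` is an Eulerian sphere of dimension `m`: every maximal face has `m+1` vertices,
the link of each nonempty face has reduced Euler characteristic `(-1)^(m - |σ|)`, and
`χ̄(K) = (-1)^m`. -/
def IsEulerianSphere {V : Type*} [DecidableEq V] (K : Finset (Finset V)) (m : ℕ) : Prop :=
  (∀ σ ∈ K, (∀ τ ∈ K, σ ⊆ τ → σ = τ) → σ.card = m + 1) ∧
  (∀ σ ∈ K, σ ≠ ∅ →
    ((rEuler (simplicialLink K σ) : ℚ) = (-1 : ℚ) ^ ((m : ℤ) - (σ.card : ℤ)))) ∧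
  (rEuler K : ℚ) = (-1 : ℚ) ^ m


/-- The product `g(σ) ∈ W(Γ)` of the generators in a finset `σ` of vertices (for a clique
`σ`, the generators pairwise commute, so this is independent of the order of
multiplication). -/
def cliqueProd {S : Type*} (Γ : SimpleGraph S) (σ : Finset S) : RACG Γ :=
  (σ.toList.map (racgCS Γ).simple).prod

namespace RacgNF

variable {S : Type*} [DecidableEq S] (Γ : SimpleGraph S)

/-- The reversed chain relation. -/
def Rel (σ τ : Finset S) : Prop :=
  ∀ x ∈ σ, ¬ Γ.IsClique ((insert x τ : Finset S) : Set S)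

/-- Normal form predicate on reversed lists of cliques. -/
def Norm (R : List (Finset S)) : Prop :=
  (∀ σ ∈ R, σ ≠ ∅ ∧ Γ.IsClique (σ : Set S)) ∧ List.Chain' (Rel Γ) R

variable {Γ}

lemma notClique_mono {A B : Finset S} (h : ¬ Γ.IsClique (B : Set S)) (hAB : B ⊆ A) :
    ¬ Γ.IsClique (A : Set S) := fun hA => h (hA.subset (by exact_mod_cast hAB))

lemma clique_insert_iff {τ : Finset S} (hτ : Γ.IsClique (τ : Set S)) (x : S) :
    Γ.IsClique ((insert x τ : Finset S) : Set S) ↔ x ∈ τ ∨ ∀ y ∈ τ, Γ.Adj x y := by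
  constructor
  · intro h
    by_cases hx : x ∈ τ
    · exact Or.inl hx
    · refine Or.inr fun y hy => ?_
      have hxy : x ≠ y := fun hxy => hx (hxy ▸ hy)
      exact h (by simp) (by simp [hy]) hxy
  · rintro (hx | hadj)
    · rwa [Finset.insert_eq_self.2 hx]
    · rw [Finset.coe_insert]
      exact hτ.insert fun y hy _ => hadj y hy

lemma adj_of_clique_insert {τ : Finset S} (hτ : Γ.IsClique (τ : Set S)) {x : S}
    (hx : x ∉ τ) (h : Γ.IsClique ((insert x τ : Finset S) : Set S)) :
    ∀ y ∈ τ, Γ.Adj x y := by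
  rcases (clique_insert_iff hτ x).1 h with h' | h'
  · exact absurd h' hx
  · exact h'

/-- Transfer of an obstruction: if `x` is adjacent to `s`, then removing `s` from `ρ`
preserves the failure of `insert x ρ` to be a clique. -/
lemma notClique_erase {ρ : Finset S} (hρ : Γ.IsClique (ρ : Set S)) {x s : S}
    (h : ¬ Γ.IsClique ((insert x ρ : Finset S) : Set S)) (hadj : Γ.Adj x s) :
    ¬ Γ.IsClique ((insert x (ρ.erase s) : Finset S) : Set S) := by
  have hx : x ∉ ρ := fun hx => h (by rwa [Finset.insert_eq_self.2 hx])
  rw [clique_insert_iff hρ] at h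
  push_neg at h
  obtain ⟨y, hy, hxy⟩ := h.2
  have hys : y ≠ s := fun hys => hxy (hys ▸ hadj)
  rw [clique_insert_iff (hρ.subset (by exact_mod_cast Finset.erase_subset s ρ))]
  push_neg
  exact ⟨fun hx' => hx (Finset.mem_of_mem_erase hx'),
    ⟨y, Finset.mem_erase.2 ⟨hys, hy⟩, hxy⟩⟩

variable (Γ)

/-- Right multiplication by the generator `s` on (reversed) normal forms. -/
def eAux (s : S) : List (Finset S) → List (Finset S)
  | [] => [{s}]
  | [τ] =>
      if s ∈ τ then (if τ.erase s = ∅ then [] else [τ.erase s])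
      else if Γ.IsClique ((insert s τ : Finset S) : Set S) then [insert s τ]
      else [{s}, τ]
  | τ :: ρ :: R =>
      if s ∈ τ then (if τ.erase s = ∅ then ρ :: R else τ.erase s :: ρ :: R)
      else if Γ.IsClique ((insert s τ : Finset S) : Set S) then
        (if s ∈ ρ ∨ Γ.IsClique ((insert s ρ : Finset S) : Set S) then τ :: eAux s (ρ :: R)
         else insert s τ :: ρ :: R)
      else {s} :: τ :: ρ :: R

variable {Γ}

lemma eAux_nil (s : S) : eAux Γ s [] = [{s}] := rfl

lemma eAux_mem {s : S} {τ : Finset S} (R : List (Finset S)) (h : s ∈ τ) :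
    eAux Γ s (τ :: R) = if τ.erase s = ∅ then R else τ.erase s :: R := by
  cases R <;> simp only [eAux, if_pos h]

lemma eAux_blocked {s : S} {τ : Finset S} (R : List (Finset S)) (h1 : s ∉ τ)
    (h2 : ¬ Γ.IsClique ((insert s τ : Finset S) : Set S)) :
    eAux Γ s (τ :: R) = {s} :: τ :: R := by
  cases R <;> simp only [eAux, if_neg h1, if_neg h2]

lemma eAux_pass_nil {s : S} {τ : Finset S} (h1 : s ∉ τ)
    (h2 : Γ.IsClique ((insert s τ : Finset S) : Set S)) :
    eAux Γ s [τ] = [insert s τ] := by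
  simp only [eAux, if_neg h1, if_pos h2]

lemma eAux_pass_go {s : S} {τ ρ : Finset S} (R : List (Finset S)) (h1 : s ∉ τ)
    (h2 : Γ.IsClique ((insert s τ : Finset S) : Set S))
    (h3 : s ∈ ρ ∨ Γ.IsClique ((insert s ρ : Finset S) : Set S)) :
    eAux Γ s (τ :: ρ :: R) = τ :: eAux Γ s (ρ :: R) := by
  simp only [eAux, if_neg h1, if_pos h2, if_pos h3]

lemma eAux_pass_stop {s : S} {τ ρ : Finset S} (R : List (Finset S)) (h1 : s ∉ τ)
    (h2 : Γ.IsClique ((insert s τ : Finset S) : Set S))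
    (h3 : ¬ (s ∈ ρ ∨ Γ.IsClique ((insert s ρ : Finset S) : Set S))) :
    eAux Γ s (τ :: ρ :: R) = insert s τ :: ρ :: R := by
  simp only [eAux, if_neg h1, if_pos h2, if_neg h3]

lemma eAux_ne_nil {s : S} {τ : Finset S} {R : List (Finset S)}
    (h : ¬ (s ∈ τ ∧ τ.erase s = ∅ ∧ R = [])) : eAux Γ s (τ :: R) ≠ [] := by
  by_cases h1 : s ∈ τ
  · rw [eAux_mem R h1]
    split_ifs with h2
    · rcases R with _ | ⟨ρ, R⟩
      · exact absurd ⟨h1, h2, rfl⟩ h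
      · simp
    · simp
  · by_cases h2 : Γ.IsClique ((insert s τ : Finset S) : Set S)
    · rcases R with _ | ⟨ρ, R⟩
      · rw [eAux_pass_nil h1 h2]; simp
      · by_cases h3 : s ∈ ρ ∨ Γ.IsClique ((insert s ρ : Finset S) : Set S)
        · rw [eAux_pass_go _ h1 h2 h3]; simp
        · rw [eAux_pass_stop _ h1 h2 h3]; simp
    · rw [eAux_blocked R h1 h2]; simp


lemma clique_pair {s x : S} (h : Γ.Adj x s) :
    Γ.IsClique ((insert x ({s} : Finset S) : Finset S) : Set S) := by
  rw [Finset.coe_insert, Finset.coe_singleton]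
  exact SimpleGraph.isClique_pair.mpr fun _ => h

lemma norm_cons_iff {τ : Finset S} {R : List (Finset S)} :
    Norm Γ (τ :: R) ↔ (τ ≠ ∅ ∧ Γ.IsClique (τ : Set S)) ∧
      (∀ b ∈ R.head?, Rel Γ τ b) ∧ Norm Γ R := by
  unfold Norm
  simp only [List.Chain', List.isChain_cons, List.forall_mem_cons]
  tauto

lemma rel_head_eAux {s : S} {τ ρ : Finset S} {R : List (Finset S)}
    (hN : Norm Γ (ρ :: R)) (hτne : τ ≠ ∅)
    (hrel : Rel Γ τ ρ) (hadj : ∀ y ∈ τ, Γ.Adj s y)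
    (hCanGo : s ∈ ρ ∨ Γ.IsClique ((insert s ρ : Finset S) : Set S)) :
    ∀ b ∈ (eAux Γ s (ρ :: R)).head?, Rel Γ τ b := by
  have hρK : Γ.IsClique (ρ : Set S) := ((norm_cons_iff.1 hN).1).2
  by_cases h1 : s ∈ ρ
  · rw [eAux_mem R h1]
    by_cases h2 : ρ.erase s = ∅
    · exfalso
      obtain ⟨x, hx⟩ := Finset.nonempty_iff_ne_empty.2 hτne
      have hρs : ρ = {s} := by
        apply Finset.eq_singleton_iff_unique_mem.2
        exact ⟨h1, fun y hy => by
          by_contra hys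
          exact absurd (Finset.mem_erase.2 ⟨hys, hy⟩) (by simp [h2])⟩
      exact hrel x hx (hρs ▸ clique_pair ((hadj x hx).symm))
    · rw [if_neg h2]
      intro b hb
      rw [List.head?_cons, Option.mem_some_iff] at hb
      subst hb
      intro x hx
      exact notClique_erase hρK (hrel x hx) (hadj x hx).symm
  · have h2 : Γ.IsClique ((insert s ρ : Finset S) : Set S) := hCanGo.resolve_left h1
    rcases R with _ | ⟨σ, R'⟩
    · rw [eAux_pass_nil h1 h2]
      intro b hb
      rw [List.head?_cons, Option.mem_some_iff] at hb
      subst hb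
      intro x hx
      exact notClique_mono (hrel x hx) (Finset.insert_subset_insert x (Finset.subset_insert s ρ))
    · by_cases h3 : s ∈ σ ∨ Γ.IsClique ((insert s σ : Finset S) : Set S)
      · rw [eAux_pass_go _ h1 h2 h3]
        intro b hb
        rw [List.head?_cons, Option.mem_some_iff] at hb
        subst hb
        exact hrel
      · rw [eAux_pass_stop _ h1 h2 h3]
        intro b hb
        rw [List.head?_cons, Option.mem_some_iff] at hb
        subst hb
        intro x hx
        exact notClique_mono (hrel x hx) (Finset.insert_subset_insert x (Finset.subset_insert s ρ))

theorem norm_eAux (s : S) {R : List (Finset S)} (hN : Norm Γ R) : Norm Γ (eAux Γ s R) := by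
  induction R using eAux.induct (Γ := Γ) (s := s) with
  | case1 =>
      rw [eAux_nil]
      exact norm_cons_iff.2 ⟨⟨by simp, by simp⟩, by simp, ⟨by simp, List.isChain_nil⟩⟩
  | case2 τ h1 h2 =>
      rw [eAux_mem _ h1, if_pos h2]
      exact ⟨by simp, List.isChain_nil⟩
  | case3 τ h1 h2 =>
      rw [eAux_mem _ h1, if_neg h2]
      rcases norm_cons_iff.1 hN with ⟨⟨hne, hK⟩, _, _⟩
      refine norm_cons_iff.2 ⟨⟨h2, hK.subset (by exact_mod_cast Finset.erase_subset s τ)⟩,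
        by simp, ⟨by simp, List.isChain_nil⟩⟩
  | case4 τ h1 h2 =>
      rw [eAux_pass_nil h1 h2]
      refine norm_cons_iff.2 ⟨⟨by simp [Finset.insert_ne_empty], h2⟩, by simp, ⟨by simp, List.isChain_nil⟩⟩
  | case5 τ h1 h2 =>
      rw [eAux_blocked _ h1 h2]
      rcases norm_cons_iff.1 hN with ⟨⟨hne, hK⟩, _, _⟩
      refine norm_cons_iff.2 ⟨⟨by simp, by simp⟩, ?_, norm_cons_iff.2 ⟨⟨hne, hK⟩, by simp, ⟨by simp, List.isChain_nil⟩⟩⟩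
      intro b hb
      rw [List.head?_cons, Option.mem_some_iff] at hb
      subst hb
      intro x hx
      rw [Finset.mem_singleton] at hx
      subst hx
      exact h2
  | case6 τ ρ R h1 h2 =>
      rw [eAux_mem _ h1, if_pos h2]
      exact (norm_cons_iff.1 hN).2.2
  | case7 τ ρ R h1 h2 =>
      rw [eAux_mem _ h1, if_neg h2]
      rcases norm_cons_iff.1 hN with ⟨⟨hne, hK⟩, hhd, htl⟩
      refine norm_cons_iff.2 ⟨⟨h2, hK.subset (by exact_mod_cast Finset.erase_subset s τ)⟩, ?_, htl⟩
      intro b hb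
      rw [List.head?_cons, Option.mem_some_iff] at hb
      subst hb
      intro x hx
      exact hhd ρ (by simp) x (Finset.mem_of_mem_erase hx)
  | case8 τ ρ R h1 h2 h3 ih =>
      rw [eAux_pass_go _ h1 h2 h3]
      rcases norm_cons_iff.1 hN with ⟨⟨hne, hK⟩, hhd, htl⟩
      refine norm_cons_iff.2 ⟨⟨hne, hK⟩, ?_, ih htl⟩
      exact rel_head_eAux htl hne (hhd ρ (by simp)) (adj_of_clique_insert hK h1 h2) h3
  | case9 τ ρ R h1 h2 h3 =>
      rw [eAux_pass_stop _ h1 h2 h3]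
      rcases norm_cons_iff.1 hN with ⟨⟨hne, hK⟩, hhd, htl⟩
      push_neg at h3
      refine norm_cons_iff.2 ⟨⟨by simp [Finset.insert_ne_empty], h2⟩, ?_, htl⟩
      intro b hb
      rw [List.head?_cons, Option.mem_some_iff] at hb
      subst hb
      intro x hx
      rcases Finset.mem_insert.1 hx with rfl | hx'
      · exact h3.2
      · exact hhd ρ (by simp) x hx'
  | case10 τ ρ R h1 h2 =>
      rw [eAux_blocked _ h1 h2]
      rcases norm_cons_iff.1 hN with ⟨⟨hne, hK⟩, hhd, htl⟩
      refine norm_cons_iff.2 ⟨⟨by simp, by simp⟩, ?_, hN⟩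
      intro b hb
      rw [List.head?_cons, Option.mem_some_iff] at hb
      subst hb
      intro x hx
      rw [Finset.mem_singleton] at hx
      subst hx
      exact h2


lemma not_cancel_all {s : S} {τ ρ : Finset S} (hτne : τ ≠ ∅) (hrel : Rel Γ τ ρ)
    (hadj : ∀ y ∈ τ, Γ.Adj s y) : ¬ (s ∈ ρ ∧ ρ.erase s = ∅) := by
  rintro ⟨h1, h2⟩
  obtain ⟨x, hx⟩ := Finset.nonempty_iff_ne_empty.2 hτne
  have hρs : ρ = {s} := by
    apply Finset.eq_singleton_iff_unique_mem.2
    exact ⟨h1, fun y hy => by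
      by_contra hys
      exact absurd (Finset.mem_erase.2 ⟨hys, hy⟩) (by simp [h2])⟩
  exact hrel x hx (hρs ▸ clique_pair ((hadj x hx).symm))

lemma canGo_head_eAux {s : S} {ρ : Finset S} {R : List (Finset S)}
    (hN : Norm Γ (ρ :: R))
    (hCanGo : s ∈ ρ ∨ Γ.IsClique ((insert s ρ : Finset S) : Set S))
    (hne : ¬ (s ∈ ρ ∧ ρ.erase s = ∅)) :
    ∀ b ∈ (eAux Γ s (ρ :: R)).head?,
      s ∈ b ∨ Γ.IsClique ((insert s b : Finset S) : Set S) := by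
  have hρK : Γ.IsClique (ρ : Set S) := ((norm_cons_iff.1 hN).1).2
  by_cases h1 : s ∈ ρ
  · have h2 : ρ.erase s ≠ ∅ := fun h => hne ⟨h1, h⟩
    rw [eAux_mem R h1, if_neg h2]
    intro b hb
    rw [List.head?_cons, Option.mem_some_iff] at hb
    subst hb
    right
    rw [Finset.insert_erase h1]
    exact hρK
  · have h2 : Γ.IsClique ((insert s ρ : Finset S) : Set S) := hCanGo.resolve_left h1
    rcases R with _ | ⟨σ, R'⟩
    · rw [eAux_pass_nil h1 h2]
      intro b hb
      rw [List.head?_cons, Option.mem_some_iff] at hb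
      subst hb
      exact Or.inl (Finset.mem_insert_self s ρ)
    · by_cases h3 : s ∈ σ ∨ Γ.IsClique ((insert s σ : Finset S) : Set S)
      · rw [eAux_pass_go _ h1 h2 h3]
        intro b hb
        rw [List.head?_cons, Option.mem_some_iff] at hb
        subst hb
        exact Or.inr h2
      · rw [eAux_pass_stop _ h1 h2 h3]
        intro b hb
        rw [List.head?_cons, Option.mem_some_iff] at hb
        subst hb
        exact Or.inl (Finset.mem_insert_self s ρ)

lemma singleton_of_erase {s : S} {τ : Finset S} (h1 : s ∈ τ) (h2 : τ.erase s = ∅) :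
    τ = {s} := by
  apply Finset.eq_singleton_iff_unique_mem.2
  exact ⟨h1, fun y hy => by
    by_contra hys
    exact absurd (Finset.mem_erase.2 ⟨hys, hy⟩) (by simp [h2])⟩

lemma not_mem_of_rel {s : S} {τ ρ : Finset S} (hρK : Γ.IsClique (ρ : Set S))
    (hs : s ∈ τ) (hrel : Rel Γ τ ρ) :
    s ∉ ρ ∧ ¬ Γ.IsClique ((insert s ρ : Finset S) : Set S) := by
  have h := hrel s hs
  exact ⟨fun h' => h (by rwa [Finset.insert_eq_self.2 h']), h⟩

theorem eAux_invol (s : S) {R : List (Finset S)} (hN : Norm Γ R) :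
    eAux Γ s (eAux Γ s R) = R := by
  induction R using eAux.induct (Γ := Γ) (s := s) with
  | case1 =>
      rw [eAux_nil, eAux_mem _ (Finset.mem_singleton_self s), if_pos (by simp)]
  | case2 τ h1 h2 =>
      rw [eAux_mem _ h1, if_pos h2, eAux_nil, singleton_of_erase h1 h2]
  | case3 τ h1 h2 =>
      rw [eAux_mem _ h1, if_neg h2]
      have h3 : s ∉ τ.erase s := Finset.notMem_erase s τ
      have h4 : Γ.IsClique ((insert s (τ.erase s) : Finset S) : Set S) := by
        rw [Finset.insert_erase h1]
        exact ((norm_cons_iff.1 hN).1).2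
      rw [eAux_pass_nil h3 h4, Finset.insert_erase h1]
  | case4 τ h1 h2 =>
      rw [eAux_pass_nil h1 h2,
        eAux_mem _ (Finset.mem_insert_self s τ), Finset.erase_insert h1,
        if_neg ((norm_cons_iff.1 hN).1).1]
  | case5 τ h1 h2 =>
      rw [eAux_blocked _ h1 h2, eAux_mem _ (Finset.mem_singleton_self s), if_pos (by simp)]
  | case6 τ ρ R h1 h2 =>
      rw [eAux_mem _ h1, if_pos h2]
      rcases norm_cons_iff.1 hN with ⟨⟨hne, hK⟩, hhd, htl⟩
      have hρK : Γ.IsClique (ρ : Set S) := ((norm_cons_iff.1 htl).1).2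
      obtain ⟨hs1, hs2⟩ := not_mem_of_rel hρK h1 (hhd ρ (by simp))
      rw [eAux_blocked _ hs1 hs2, singleton_of_erase h1 h2]
  | case7 τ ρ R h1 h2 =>
      rw [eAux_mem _ h1, if_neg h2]
      rcases norm_cons_iff.1 hN with ⟨⟨hne, hK⟩, hhd, htl⟩
      have hρK : Γ.IsClique (ρ : Set S) := ((norm_cons_iff.1 htl).1).2
      obtain ⟨hs1, hs2⟩ := not_mem_of_rel hρK h1 (hhd ρ (by simp))
      have h3 : s ∉ τ.erase s := Finset.notMem_erase s τ
      have h4 : Γ.IsClique ((insert s (τ.erase s) : Finset S) : Set S) := by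
        rw [Finset.insert_erase h1]; exact hK
      rw [eAux_pass_stop _ h3 h4 (by tauto), Finset.insert_erase h1]
  | case8 τ ρ R h1 h2 h3 ih =>
      rw [eAux_pass_go _ h1 h2 h3]
      rcases norm_cons_iff.1 hN with ⟨⟨hne, hK⟩, hhd, htl⟩
      have hadj : ∀ y ∈ τ, Γ.Adj s y := adj_of_clique_insert hK h1 h2
      have hnc : ¬ (s ∈ ρ ∧ ρ.erase s = ∅) := not_cancel_all hne (hhd ρ (by simp)) hadj
      have hEne : eAux Γ s (ρ :: R) ≠ [] := eAux_ne_nil (by tauto)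
      obtain ⟨b, E', hE⟩ := List.exists_cons_of_ne_nil hEne
      have hCanGo : s ∈ b ∨ Γ.IsClique ((insert s b : Finset S) : Set S) := by
        have := canGo_head_eAux htl h3 hnc
        rw [hE] at this
        exact this b (by simp)
      rw [hE, eAux_pass_go _ h1 h2 hCanGo, ← hE, ih htl]
  | case9 τ ρ R h1 h2 h3 =>
      rw [eAux_pass_stop _ h1 h2 h3,
        eAux_mem _ (Finset.mem_insert_self s τ), Finset.erase_insert h1,
        if_neg ((norm_cons_iff.1 hN).1).1]
  | case10 τ ρ R h1 h2 =>
      rw [eAux_blocked _ h1 h2, eAux_mem _ (Finset.mem_singleton_self s), if_pos (by simp)]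

lemma sumcard_eAux (s : S) {R : List (Finset S)} (hN : Norm Γ R) :
    ((eAux Γ s R).map Finset.card).sum = (R.map Finset.card).sum + 1 ∨
    ((eAux Γ s R).map Finset.card).sum + 1 = (R.map Finset.card).sum := by
  induction R using eAux.induct (Γ := Γ) (s := s) with
  | case1 => left; simp [eAux_nil]
  | case2 τ h1 h2 =>
      right
      rw [eAux_mem _ h1, if_pos h2]
      have := singleton_of_erase h1 h2
      subst this
      simp
  | case3 τ h1 h2 =>
      right
      rw [eAux_mem _ h1, if_neg h2]
      have hcard : τ.card ≠ 0 := by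
        simp only [ne_eq, Finset.card_eq_zero]
        intro h
        rw [h] at h1
        exact absurd h1 (Finset.notMem_empty s)
      simp only [List.map_cons, List.sum_cons, List.map_nil, List.sum_nil,
        Finset.card_erase_of_mem h1]
      omega
  | case4 τ h1 h2 =>
      left
      rw [eAux_pass_nil h1 h2]
      simp [Finset.card_insert_of_notMem h1]
  | case5 τ h1 h2 =>
      left
      rw [eAux_blocked _ h1 h2]
      simp; ring
  | case6 τ ρ R h1 h2 =>
      right
      rw [eAux_mem _ h1, if_pos h2]
      have := singleton_of_erase h1 h2
      subst this
      simp only [List.map_cons, List.sum_cons, Finset.card_singleton]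
      omega
  | case7 τ ρ R h1 h2 =>
      right
      rw [eAux_mem _ h1, if_neg h2]
      have hcard : τ.card ≠ 0 := by
        simp only [ne_eq, Finset.card_eq_zero]
        intro h
        rw [h] at h1
        exact absurd h1 (Finset.notMem_empty s)
      simp only [List.map_cons, List.sum_cons, Finset.card_erase_of_mem h1]
      omega
  | case8 τ ρ R h1 h2 h3 ih =>
      rw [eAux_pass_go _ h1 h2 h3]
      rcases norm_cons_iff.1 hN with ⟨_, _, htl⟩
      rcases ih htl with h | h
      · left; simp only [List.map_cons, List.sum_cons, h]; omega
      · right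
        simp only [List.map_cons, List.sum_cons]
        simp only [List.map_cons, List.sum_cons] at h ⊢
        omega
  | case9 τ ρ R h1 h2 h3 =>
      left
      rw [eAux_pass_stop _ h1 h2 h3]
      simp [Finset.card_insert_of_notMem h1]; ring
  | case10 τ ρ R h1 h2 =>
      left
      rw [eAux_blocked _ h1 h2]
      simp; ring


lemma clique_insert_insert {s t : S} {τ : Finset S} (hst : s ≠ t) (hadj : Γ.Adj s t)
    (hτK : Γ.IsClique (τ : Set S)) (hs1 : s ∉ τ)
    (hs2 : Γ.IsClique ((insert s τ : Finset S) : Set S))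
    (ht2 : Γ.IsClique ((insert t τ : Finset S) : Set S)) :
    Γ.IsClique ((insert s (insert t τ) : Finset S) : Set S) := by
  rw [Finset.coe_insert]
  apply ht2.insert
  intro y hy hys
  rw [Finset.coe_insert, Set.mem_insert_iff] at hy
  rcases hy with rfl | hy
  · exact hadj
  · exact adj_of_clique_insert hτK hs1 hs2 y hy

/-- Case (A,A): both letters cancel into the head block. -/
lemma comm_AA {s t : S} (hst : s ≠ t) {τ : Finset S} (R : List (Finset S))
    (hs : s ∈ τ) (ht : t ∈ τ) :
    eAux Γ s (eAux Γ t (τ :: R)) = eAux Γ t (eAux Γ s (τ :: R)) := by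
  have hs' : s ∈ τ.erase t := Finset.mem_erase.2 ⟨hst, hs⟩
  have ht' : t ∈ τ.erase s := Finset.mem_erase.2 ⟨hst.symm, ht⟩
  have hτet : τ.erase t ≠ ∅ := fun h => by simp [h] at hs'
  have hτes : τ.erase s ≠ ∅ := fun h => by simp [h] at ht'
  rw [eAux_mem _ ht, if_neg hτet, eAux_mem _ hs', eAux_mem _ hs, if_neg hτes,
    eAux_mem _ ht', Finset.erase_right_comm]

/-- Case (A,B): `s` cancels into the head, `t` passes it. -/
lemma comm_AB {s t : S} (hst : s ≠ t) {τ : Finset S} (R : List (Finset S))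
    (hs : s ∈ τ) (ht1 : t ∉ τ) (ht2 : Γ.IsClique ((insert t τ : Finset S) : Set S)) :
    eAux Γ s (eAux Γ t (τ :: R)) = eAux Γ t (eAux Γ s (τ :: R)) := by
  have hstτ : s ∈ insert t τ := Finset.mem_insert_of_mem hs
  have herins : (insert t τ).erase s = insert t (τ.erase s) :=
    Finset.erase_insert_of_ne hst.symm
  have hins_ne : insert t (τ.erase s) ≠ ∅ := Finset.insert_ne_empty t _
  have hK' : ∀ (h : τ.erase s ≠ ∅), Γ.IsClique ((insert t (τ.erase s) : Finset S) : Set S) :=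
    fun _ => ht2.subset (by
      intro x hx
      simp only [Finset.coe_insert, Set.mem_insert_iff, Finset.mem_coe] at hx ⊢
      rcases hx with rfl | hx
      · exact Or.inl rfl
      · exact Or.inr (Finset.mem_of_mem_erase hx))
  have ht1' : t ∉ τ.erase s := fun h => ht1 (Finset.mem_of_mem_erase h)
  rcases R with _ | ⟨ρ, R'⟩
  · rw [eAux_pass_nil ht1 ht2, eAux_mem _ hstτ, herins, if_neg hins_ne,
      eAux_mem _ hs]
    by_cases he : τ.erase s = ∅
    · rw [if_pos he, eAux_nil, he]
      simp
    · rw [if_neg he, eAux_pass_nil ht1' (hK' he)]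
  · by_cases hGt : t ∈ ρ ∨ Γ.IsClique ((insert t ρ : Finset S) : Set S)
    · rw [eAux_pass_go _ ht1 ht2 hGt, eAux_mem _ hs, eAux_mem _ hs]
      by_cases he : τ.erase s = ∅
      · rw [if_pos he, if_pos he]
      · rw [if_neg he, if_neg he, eAux_pass_go _ ht1' (hK' he) hGt]
    · rw [eAux_pass_stop _ ht1 ht2 hGt, eAux_mem _ hstτ, herins, if_neg hins_ne,
        eAux_mem _ hs]
      by_cases he : τ.erase s = ∅
      · rw [if_pos he, he]
        push_neg at hGt
        rw [eAux_blocked _ hGt.1 hGt.2]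
        simp
      · rw [if_neg he, eAux_pass_stop _ ht1' (hK' he) hGt]

/-- Case (A,C): `s` cancels into the head, `t` is blocked by it. -/
lemma comm_AC {s t : S} (hst : s ≠ t) (hadj : Γ.Adj s t) {τ : Finset S} (R : List (Finset S))
    (hτK : Γ.IsClique (τ : Set S))
    (hs : s ∈ τ) (ht1 : t ∉ τ) (ht2 : ¬ Γ.IsClique ((insert t τ : Finset S) : Set S)) :
    eAux Γ s (eAux Γ t (τ :: R)) = eAux Γ t (eAux Γ s (τ :: R)) := by
  have he : τ.erase s ≠ ∅ := by
    intro h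
    have := singleton_of_erase hs h
    subst this
    exact ht2 (clique_pair hadj.symm)
  have hsn : s ∉ ({t} : Finset S) := by simp [hst]
  have hKst : Γ.IsClique ((insert s ({t} : Finset S) : Finset S) : Set S) :=
    clique_pair hadj
  have ht1' : t ∉ τ.erase s := fun h => ht1 (Finset.mem_of_mem_erase h)
  have ht2' : ¬ Γ.IsClique ((insert t (τ.erase s) : Finset S) : Set S) :=
    notClique_erase hτK ht2 hadj.symm
  rw [eAux_blocked _ ht1 ht2, eAux_pass_go _ hsn hKst (Or.inl hs),
    eAux_mem _ hs, if_neg he, eAux_blocked _ ht1' ht2']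

/-- Case (C,C): both letters are blocked by the head. -/
lemma comm_CC {s t : S} (hst : s ≠ t) (hadj : Γ.Adj s t) {τ : Finset S} (R : List (Finset S))
    (hs1 : s ∉ τ) (hs2 : ¬ Γ.IsClique ((insert s τ : Finset S) : Set S))
    (ht1 : t ∉ τ) (ht2 : ¬ Γ.IsClique ((insert t τ : Finset S) : Set S)) :
    eAux Γ s (eAux Γ t (τ :: R)) = eAux Γ t (eAux Γ s (τ :: R)) := by
  have hsn : s ∉ ({t} : Finset S) := by simp [hst]
  have htn : t ∉ ({s} : Finset S) := by simp [hst.symm]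
  rw [eAux_blocked _ ht1 ht2, eAux_blocked _ hs1 hs2,
    eAux_pass_stop _ hsn (clique_pair hadj) (by push_neg; exact ⟨hs1, hs2⟩),
    eAux_pass_stop _ htn (clique_pair hadj.symm) (by push_neg; exact ⟨ht1, ht2⟩)]
  rw [Finset.pair_comm]

/-- Case (B,C): `s` passes the head, `t` is blocked by it. -/
lemma comm_BC {s t : S} (hst : s ≠ t) (hadj : Γ.Adj s t) {τ : Finset S} (R : List (Finset S))
    (hs1 : s ∉ τ) (hs2 : Γ.IsClique ((insert s τ : Finset S) : Set S))
    (ht1 : t ∉ τ) (ht2 : ¬ Γ.IsClique ((insert t τ : Finset S) : Set S)) :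
    eAux Γ s (eAux Γ t (τ :: R)) = eAux Γ t (eAux Γ s (τ :: R)) := by
  have hsn : s ∉ ({t} : Finset S) := by simp [hst]
  have hKst : Γ.IsClique ((insert s ({t} : Finset S) : Finset S) : Set S) :=
    clique_pair hadj
  have htins : t ∉ insert s τ := by simp [hst.symm, ht1]
  have ht2' : ¬ Γ.IsClique ((insert t (insert s τ) : Finset S) : Set S) :=
    notClique_mono ht2 (Finset.insert_subset_insert t (Finset.subset_insert s τ))
  rw [eAux_blocked _ ht1 ht2, eAux_pass_go _ hsn hKst (Or.inr hs2)]
  rcases R with _ | ⟨ρ, R'⟩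
  · rw [eAux_pass_nil hs1 hs2, eAux_blocked _ htins ht2']
  · by_cases hGs : s ∈ ρ ∨ Γ.IsClique ((insert s ρ : Finset S) : Set S)
    · rw [eAux_pass_go _ hs1 hs2 hGs, eAux_blocked _ ht1 ht2]
    · rw [eAux_pass_stop _ hs1 hs2 hGs, eAux_blocked _ htins ht2']


lemma notCanGo_head_eAux {s t : S} {ρ : Finset S} {R' : List (Finset S)}
    (hρK : Γ.IsClique (ρ : Set S)) (hst : s ≠ t) (hadjts : Γ.Adj t s)
    (hGs : s ∈ ρ ∨ Γ.IsClique ((insert s ρ : Finset S) : Set S))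
    (hGt : ¬ (t ∈ ρ ∨ Γ.IsClique ((insert t ρ : Finset S) : Set S))) :
    ∀ b ∈ (eAux Γ s (ρ :: R')).head?,
      ¬ (t ∈ b ∨ Γ.IsClique ((insert t b : Finset S) : Set S)) := by
  push_neg at hGt
  by_cases h1 : s ∈ ρ
  · have h2 : ρ.erase s ≠ ∅ := by
      intro h
      have := singleton_of_erase h1 h
      subst this
      exact hGt.2 (clique_pair hadjts)
    rw [eAux_mem _ h1, if_neg h2]
    intro b hb
    rw [List.head?_cons, Option.mem_some_iff] at hb
    subst hb
    push_neg
    exact ⟨fun h => hGt.1 (Finset.mem_of_mem_erase h),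
      notClique_erase hρK hGt.2 hadjts⟩
  · have h2 : Γ.IsClique ((insert s ρ : Finset S) : Set S) := hGs.resolve_left h1
    have hmono : ¬ Γ.IsClique ((insert t (insert s ρ) : Finset S) : Set S) := by
      intro hK
      apply hGt.2
      -- insert t ρ ⊆ insert t (insert s ρ)
      exact hK.subset (by
        intro x hx
        simp only [Finset.coe_insert, Set.mem_insert_iff, Finset.mem_coe] at hx ⊢
        tauto)
    have htm : t ∉ insert s ρ := by
      simp only [Finset.mem_insert]
      push_neg
      exact ⟨hst.symm, hGt.1⟩
    rcases R' with _ | ⟨σ, R''⟩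
    · rw [eAux_pass_nil h1 h2]
      intro b hb
      rw [List.head?_cons, Option.mem_some_iff] at hb
      subst hb
      push_neg
      exact ⟨htm, hmono⟩
    · by_cases h3 : s ∈ σ ∨ Γ.IsClique ((insert s σ : Finset S) : Set S)
      · rw [eAux_pass_go _ h1 h2 h3]
        intro b hb
        rw [List.head?_cons, Option.mem_some_iff] at hb
        subst hb
        push_neg
        exact hGt
      · rw [eAux_pass_stop _ h1 h2 h3]
        intro b hb
        rw [List.head?_cons, Option.mem_some_iff] at hb
        subst hb
        push_neg
        exact ⟨htm, hmono⟩

lemma canGo_head_eAux₂ {s t : S} {ρ : Finset S} {R' : List (Finset S)}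
    (hρK : Γ.IsClique (ρ : Set S)) (hst : s ≠ t) (hadj : Γ.Adj s t)
    (hGs : s ∈ ρ ∨ Γ.IsClique ((insert s ρ : Finset S) : Set S))
    (hne : ¬ (t ∈ ρ ∧ ρ.erase t = ∅)) :
    ∀ b ∈ (eAux Γ t (ρ :: R')).head?,
      s ∈ b ∨ Γ.IsClique ((insert s b : Finset S) : Set S) := by
  by_cases h1 : t ∈ ρ
  · have h2 : ρ.erase t ≠ ∅ := fun h => hne ⟨h1, h⟩
    rw [eAux_mem _ h1, if_neg h2]
    intro b hb
    rw [List.head?_cons, Option.mem_some_iff] at hb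
    subst hb
    rcases hGs with h | h
    · exact Or.inl (Finset.mem_erase.2 ⟨hst, h⟩)
    · refine Or.inr (h.subset ?_)
      intro x hx
      simp only [Finset.coe_insert, Set.mem_insert_iff, Finset.mem_coe] at hx ⊢
      rcases hx with rfl | hx
      · exact Or.inl rfl
      · exact Or.inr (Finset.mem_of_mem_erase hx)
  · by_cases h2 : Γ.IsClique ((insert t ρ : Finset S) : Set S)
    · have hins : s ∈ insert t ρ ∨
          Γ.IsClique ((insert s (insert t ρ) : Finset S) : Set S) := by
        rcases hGs with h | h
        · exact Or.inl (Finset.mem_insert_of_mem h)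
        · by_cases hsρ : s ∈ ρ
          · exact Or.inl (Finset.mem_insert_of_mem hsρ)
          · exact Or.inr (by
              rw [Finset.insert_comm]
              exact clique_insert_insert hst.symm hadj.symm hρK h1 h2 h)
      rcases R' with _ | ⟨σ, R''⟩
      · rw [eAux_pass_nil h1 h2]
        intro b hb
        rw [List.head?_cons, Option.mem_some_iff] at hb
        subst hb
        exact hins
      · by_cases h3 : t ∈ σ ∨ Γ.IsClique ((insert t σ : Finset S) : Set S)
        · rw [eAux_pass_go _ h1 h2 h3]
          intro b hb
          rw [List.head?_cons, Option.mem_some_iff] at hb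
          subst hb
          exact hGs
        · rw [eAux_pass_stop _ h1 h2 h3]
          intro b hb
          rw [List.head?_cons, Option.mem_some_iff] at hb
          subst hb
          exact hins
    · rw [eAux_blocked _ h1 h2]
      intro b hb
      rw [List.head?_cons, Option.mem_some_iff] at hb
      subst hb
      exact Or.inr (clique_pair hadj)

lemma comm_BB_go_stop {s t : S} {τ ρ : Finset S} {R' : List (Finset S)}
    (hst : s ≠ t) (hadj : Γ.Adj s t) (hN : Norm Γ (τ :: ρ :: R'))
    (hs1 : s ∉ τ) (hs2 : Γ.IsClique ((insert s τ : Finset S) : Set S))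
    (ht1 : t ∉ τ) (ht2 : Γ.IsClique ((insert t τ : Finset S) : Set S))
    (hGs : s ∈ ρ ∨ Γ.IsClique ((insert s ρ : Finset S) : Set S))
    (hGt : ¬ (t ∈ ρ ∨ Γ.IsClique ((insert t ρ : Finset S) : Set S))) :
    eAux Γ s (eAux Γ t (τ :: ρ :: R')) = eAux Γ t (eAux Γ s (τ :: ρ :: R')) := by
  rcases norm_cons_iff.1 hN with ⟨⟨hτne, hτK⟩, hhd, htl⟩
  have hρK : Γ.IsClique (ρ : Set S) := ((norm_cons_iff.1 htl).1).2
  have hsins : s ∉ insert t τ := by simp [hst, hs1]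
  have hKins : Γ.IsClique ((insert s (insert t τ) : Finset S) : Set S) :=
    clique_insert_insert hst hadj hτK hs1 hs2 ht2
  have hne : ¬ (s ∈ ρ ∧ ρ.erase s = ∅) := by
    rintro ⟨h1', h2'⟩
    have := singleton_of_erase h1' h2'
    subst this
    push_neg at hGt
    exact hGt.2 (clique_pair hadj.symm)
  have hEne : eAux Γ s (ρ :: R') ≠ [] := eAux_ne_nil (by tauto)
  obtain ⟨b, E', hE⟩ := List.exists_cons_of_ne_nil hEne
  have hb : ¬ (t ∈ b ∨ Γ.IsClique ((insert t b : Finset S) : Set S)) := by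
    have := notCanGo_head_eAux (R' := R') hρK hst hadj.symm hGs hGt
    rw [hE] at this
    exact this b (by simp)
  rw [eAux_pass_stop _ ht1 ht2 hGt, eAux_pass_go _ hsins hKins hGs,
    eAux_pass_go _ hs1 hs2 hGs, hE, eAux_pass_stop _ ht1 ht2 hb]

theorem eAux_comm {s t : S} (hst : s ≠ t) (hadj : Γ.Adj s t) :
    ∀ {R : List (Finset S)}, Norm Γ R →
      eAux Γ s (eAux Γ t R) = eAux Γ t (eAux Γ s R) := by
  intro R
  induction R with
  | nil =>
      intro _
      have hsn : s ∉ ({t} : Finset S) := by simp [hst]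
      have htn : t ∉ ({s} : Finset S) := by simp [hst.symm]
      rw [eAux_nil, eAux_nil, eAux_pass_nil hsn (clique_pair hadj),
        eAux_pass_nil htn (clique_pair hadj.symm), Finset.pair_comm]
  | cons τ R ih =>
      intro hN
      rcases norm_cons_iff.1 hN with ⟨⟨hτne, hτK⟩, hhd, htl⟩
      by_cases hsA : s ∈ τ <;> by_cases htA : t ∈ τ
      · exact comm_AA hst R hsA htA
      · by_cases htK : Γ.IsClique ((insert t τ : Finset S) : Set S)
        · exact comm_AB hst R hsA htA htK
        · exact comm_AC hst hadj R hτK hsA htA htK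
      · by_cases hsK : Γ.IsClique ((insert s τ : Finset S) : Set S)
        · exact (comm_AB hst.symm R htA hsA hsK).symm
        · exact (comm_AC hst.symm hadj.symm R hτK htA hsA hsK).symm
      · by_cases hsK : Γ.IsClique ((insert s τ : Finset S) : Set S) <;>
          by_cases htK : Γ.IsClique ((insert t τ : Finset S) : Set S)
        · -- both pass
          rcases R with _ | ⟨ρ, R'⟩
          · have h1 : s ∉ insert t τ := by simp [hst, hsA]
            have h2 : t ∉ insert s τ := by simp [hst.symm, htA]
            rw [eAux_pass_nil htA htK, eAux_pass_nil hsA hsK,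
              eAux_pass_nil h1 (clique_insert_insert hst hadj hτK hsA hsK htK),
              eAux_pass_nil h2 (clique_insert_insert hst.symm hadj.symm hτK htA htK hsK),
              Finset.insert_comm]
          · have hρK : Γ.IsClique (ρ : Set S) := ((norm_cons_iff.1 htl).1).2
            have hrel : Rel Γ τ ρ := hhd ρ (by simp)
            by_cases hGs : s ∈ ρ ∨ Γ.IsClique ((insert s ρ : Finset S) : Set S) <;>
              by_cases hGt : t ∈ ρ ∨ Γ.IsClique ((insert t ρ : Finset S) : Set S)
            · -- both go
              have hne_s : ¬ (s ∈ ρ ∧ ρ.erase s = ∅) :=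
                not_cancel_all hτne hrel (adj_of_clique_insert hτK hsA hsK)
              have hne_t : ¬ (t ∈ ρ ∧ ρ.erase t = ∅) :=
                not_cancel_all hτne hrel (adj_of_clique_insert hτK htA htK)
              have hEt : eAux Γ t (ρ :: R') ≠ [] := eAux_ne_nil (by tauto)
              have hEs : eAux Γ s (ρ :: R') ≠ [] := eAux_ne_nil (by tauto)
              obtain ⟨bt, Et', hEt'⟩ := List.exists_cons_of_ne_nil hEt
              obtain ⟨bs, Es', hEs'⟩ := List.exists_cons_of_ne_nil hEs
              have hbt : s ∈ bt ∨ Γ.IsClique ((insert s bt : Finset S) : Set S) := by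
                have := canGo_head_eAux₂ (R' := R') hρK hst hadj hGs hne_t
                rw [hEt'] at this
                exact this bt (by simp)
              have hbs : t ∈ bs ∨ Γ.IsClique ((insert t bs : Finset S) : Set S) := by
                have := canGo_head_eAux₂ (R' := R') hρK hst.symm hadj.symm hGt hne_s
                rw [hEs'] at this
                exact this bs (by simp)
              rw [eAux_pass_go _ htA htK hGt, eAux_pass_go _ hsA hsK hGs,
                hEt', eAux_pass_go _ hsA hsK hbt, hEs', eAux_pass_go _ htA htK hbs,
                ← hEt', ← hEs', ih htl]
            · exact comm_BB_go_stop hst hadj hN hsA hsK htA htK hGs hGt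
            · exact (comm_BB_go_stop hst.symm hadj.symm hN htA htK hsA hsK hGt hGs).symm
            · have h1 : s ∉ insert t τ := by simp [hst, hsA]
              have h2 : t ∉ insert s τ := by simp [hst.symm, htA]
              rw [eAux_pass_stop _ htA htK hGt, eAux_pass_stop _ hsA hsK hGs,
                eAux_pass_stop _ h1 (clique_insert_insert hst hadj hτK hsA hsK htK) hGs,
                eAux_pass_stop _ h2 (clique_insert_insert hst.symm hadj.symm hτK htA htK hsK) hGt,
                Finset.insert_comm]
        · exact comm_BC hst hadj R hsA hsK htA htK
        · exact (comm_BC hst.symm hadj.symm R htA htK hsA hsK).symm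
        · exact comm_CC hst hadj R hsA hsK htA htK


end RacgNF

/-! ### Group-theoretic layer -/

section Group

variable {S : Type*} [DecidableEq S] (Γ : SimpleGraph S)

lemma racgMatrix_adj {i j : S} (h : Γ.Adj i j) : (racgMatrix Γ) i j = 2 := by
  have hne : i ≠ j := Γ.ne_of_adj h
  show (racgMatrix Γ).M i j = 2
  simp [racgMatrix, hne, h]

lemma simple_comm {i j : S} (h : Γ.Adj i j) :
    (racgCS Γ).simple i * (racgCS Γ).simple j
      = (racgCS Γ).simple j * (racgCS Γ).simple i := by
  have h2 := (racgCS Γ).simple_mul_simple_pow i j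
  rw [racgMatrix_adj Γ h] at h2
  have h3 : ((racgCS Γ).simple i * (racgCS Γ).simple j) *
      ((racgCS Γ).simple i * (racgCS Γ).simple j) = 1 := by
    rw [← sq]; exact h2
  calc (racgCS Γ).simple i * (racgCS Γ).simple j
      = ((racgCS Γ).simple i * (racgCS Γ).simple j)⁻¹ := by
        exact eq_inv_of_mul_eq_one_right h3
    _ = ((racgCS Γ).simple j)⁻¹ * ((racgCS Γ).simple i)⁻¹ := by rw [mul_inv_rev]
    _ = (racgCS Γ).simple j * (racgCS Γ).simple i := by
        rw [(racgCS Γ).inv_simple, (racgCS Γ).inv_simple]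

variable {Γ}

lemma commute_simple_of_adjAll {i : S} {τ : Finset S} (h : ∀ y ∈ τ, Γ.Adj i y) :
    Commute ((racgCS Γ).simple i) (cliqueProd Γ τ) := by
  apply Commute.list_prod_right
  intro x hx
  rw [List.mem_map] at hx
  obtain ⟨y, hy, rfl⟩ := hx
  exact simple_comm Γ (h y (Finset.mem_toList.1 hy))

lemma pairwise_commute_simple_of_clique {τ : Finset S} (hτ : Γ.IsClique (τ : Set S)) :
    (τ.toList.map (racgCS Γ).simple).Pairwise Commute := by
  rw [List.pairwise_map]
  refine List.Pairwise.imp_of_mem ?_ τ.nodup_toList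
  intro a b ha hb hab
  exact simple_comm Γ (hτ (Finset.mem_coe.2 (Finset.mem_toList.1 ha))
    (Finset.mem_coe.2 (Finset.mem_toList.1 hb)) hab)

lemma cliqueProd_insert {x : S} {τ : Finset S} (hx : x ∉ τ)
    (hK : Γ.IsClique ((insert x τ : Finset S) : Set S)) :
    cliqueProd Γ (insert x τ) = (racgCS Γ).simple x * cliqueProd Γ τ := by
  have hperm : (insert x τ).toList.Perm (x :: τ.toList) := by
    have := Finset.toList_insert hx
    exact this
  have hperm' : ((insert x τ).toList.map (racgCS Γ).simple).Perm
      ((x :: τ.toList).map (racgCS Γ).simple) := hperm.map _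
  unfold cliqueProd
  rw [hperm'.prod_eq' (pairwise_commute_simple_of_clique hK)]
  simp

lemma cliqueProd_singleton (x : S) : cliqueProd Γ ({x} : Finset S) = (racgCS Γ).simple x := by
  unfold cliqueProd
  rw [Finset.toList_singleton]
  simp

lemma cliqueProd_insert' {x : S} {τ : Finset S} (hx : x ∉ τ)
    (hK : Γ.IsClique ((insert x τ : Finset S) : Set S)) :
    cliqueProd Γ (insert x τ) = cliqueProd Γ τ * (racgCS Γ).simple x := by
  rw [cliqueProd_insert hx hK]
  have hτK : Γ.IsClique (τ : Set S) := hK.subset (by exact_mod_cast Finset.subset_insert x τ)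
  exact (commute_simple_of_adjAll (RacgNF.adj_of_clique_insert hτK hx hK)).eq

lemma cliqueProd_erase {x : S} {τ : Finset S} (hx : x ∈ τ)
    (hK : Γ.IsClique (τ : Set S)) :
    cliqueProd Γ τ = cliqueProd Γ (τ.erase x) * (racgCS Γ).simple x := by
  conv_lhs => rw [← Finset.insert_erase hx]
  rw [cliqueProd_insert' (Finset.notMem_erase x τ) (by rw [Finset.insert_erase hx]; exact hK)]

lemma cliqueProd_mul_self {τ : Finset S} (hK : Γ.IsClique (τ : Set S)) :
    cliqueProd Γ τ * cliqueProd Γ τ = 1 := by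
  induction τ using Finset.induction_on with
  | empty => simp [cliqueProd]
  | @insert a σ ha ih =>
      have hσK : Γ.IsClique (σ : Set S) := hK.subset (by exact_mod_cast Finset.subset_insert a σ)
      have hcomm := commute_simple_of_adjAll (Γ := Γ) (RacgNF.adj_of_clique_insert hσK ha hK)
      rw [cliqueProd_insert ha hK, hcomm.symm.mul_mul_mul_comm,
        (racgCS Γ).simple_mul_simple_self a, one_mul, ih hσK]

lemma cliqueProd_inv {τ : Finset S} (hK : Γ.IsClique (τ : Set S)) :
    (cliqueProd Γ τ)⁻¹ = cliqueProd Γ τ :=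
  (eq_inv_of_mul_eq_one_right (cliqueProd_mul_self hK)).symm

/-- The product of a reversed list of cliques. -/
def Pr (R : List (Finset S)) : RACG Γ :=
  ((R.reverse).map (cliqueProd Γ)).prod

lemma Pr_nil : Pr (Γ := Γ) [] = 1 := rfl

lemma Pr_cons (τ : Finset S) (R : List (Finset S)) :
    Pr (Γ := Γ) (τ :: R) = Pr (Γ := Γ) R * cliqueProd Γ τ := by
  unfold Pr
  rw [List.reverse_cons, List.map_append, List.prod_append]
  simp

open RacgNF in
lemma Pr_eAux (s : S) {R : List (Finset S)} (hN : Norm Γ R) :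
    Pr (Γ := Γ) (eAux Γ s R) = Pr (Γ := Γ) R * (racgCS Γ).simple s := by
  induction R using eAux.induct (Γ := Γ) (s := s) with
  | case1 => rw [eAux_nil, Pr_cons, cliqueProd_singleton]
  | case2 τ h1 h2 =>
      rw [eAux_mem _ h1, if_pos h2, Pr_cons, singleton_of_erase h1 h2,
        cliqueProd_singleton, mul_assoc, (racgCS Γ).simple_mul_simple_self s, mul_one]
  | case3 τ h1 h2 =>
      have hτK : Γ.IsClique (τ : Set S) := ((norm_cons_iff.1 hN).1).2
      rw [eAux_mem _ h1, if_neg h2, Pr_cons, Pr_cons,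
        cliqueProd_erase h1 hτK, mul_assoc, mul_assoc,
        (racgCS Γ).simple_mul_simple_self s, mul_one]
  | case4 τ h1 h2 =>
      rw [eAux_pass_nil h1 h2, Pr_cons, Pr_cons, cliqueProd_insert' h1 h2, mul_assoc]
  | case5 τ h1 h2 =>
      rw [eAux_blocked _ h1 h2, Pr_cons, Pr_cons, cliqueProd_singleton, mul_assoc]
  | case6 τ ρ R h1 h2 =>
      rw [eAux_mem _ h1, if_pos h2, singleton_of_erase h1 h2]
      simp only [Pr_cons, cliqueProd_singleton]
      rw [(racgCS Γ).simple_mul_simple_cancel_right]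
  | case7 τ ρ R h1 h2 =>
      have hτK : Γ.IsClique (τ : Set S) := ((norm_cons_iff.1 hN).1).2
      rw [eAux_mem _ h1, if_neg h2]
      simp only [Pr_cons]
      rw [cliqueProd_erase h1 hτK, ← mul_assoc, (racgCS Γ).simple_mul_simple_cancel_right]
  | case8 τ ρ R h1 h2 h3 ih =>
      have hτK : Γ.IsClique (τ : Set S) := ((norm_cons_iff.1 hN).1).2
      have htl : Norm Γ (ρ :: R) := (norm_cons_iff.1 hN).2.2
      have hc := (commute_simple_of_adjAll (RacgNF.adj_of_clique_insert hτK h1 h2)).eq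
      rw [eAux_pass_go _ h1 h2 h3]
      simp only [Pr_cons]
      rw [ih htl]
      simp only [mul_assoc]
      rw [hc, Pr_cons]
      simp only [mul_assoc]
  | case9 τ ρ R h1 h2 h3 =>
      rw [eAux_pass_stop _ h1 h2 h3]
      simp only [Pr_cons]
      rw [cliqueProd_insert' h1 h2]
      simp only [mul_assoc]
  | case10 τ ρ R h1 h2 =>
      rw [eAux_blocked _ h1 h2]
      simp only [Pr_cons, cliqueProd_singleton, mul_assoc]

open RacgNF

variable (Γ)

lemma norm_nil : Norm Γ ([] : List (Finset S)) := ⟨by simp, List.isChain_nil⟩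

/-- Normal forms as a subtype. -/
abbrev NFt := {R : List (Finset S) // Norm Γ R}

/-- The generator `i` acting on normal forms. -/
def Emap (i : S) : Equiv.Perm (NFt Γ) where
  toFun X := ⟨eAux Γ i X.1, norm_eAux i X.2⟩
  invFun X := ⟨eAux Γ i X.1, norm_eAux i X.2⟩
  left_inv X := Subtype.ext (eAux_invol i X.2)
  right_inv X := Subtype.ext (eAux_invol i X.2)

lemma Emap_liftable : (racgMatrix Γ).IsLiftable (fun i => Emap Γ i) := by
  intro i j
  rcases eq_or_ne i j with rfl | hij
  · have hM : (racgMatrix Γ) i i = 1 := (racgMatrix Γ).diagonal i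
    rw [hM, pow_one]
    refine Equiv.ext fun X => Subtype.ext ?_
    rw [Equiv.Perm.mul_apply]
    show eAux Γ i (eAux Γ i X.1) = ((1 : Equiv.Perm (NFt Γ)) X).1
    rw [Equiv.Perm.one_apply]
    exact eAux_invol i X.2
  · by_cases hadj : Γ.Adj i j
    · have hM : (racgMatrix Γ) i j = 2 := racgMatrix_adj Γ hadj
      rw [hM]
      refine Equiv.ext fun X => Subtype.ext ?_
      rw [sq, Equiv.Perm.mul_apply, Equiv.Perm.mul_apply, Equiv.Perm.mul_apply]
      show eAux Γ i (eAux Γ j (eAux Γ i (eAux Γ j X.1))) = ((1 : Equiv.Perm (NFt Γ)) X).1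
      rw [Equiv.Perm.one_apply]
      have hc : eAux Γ j (eAux Γ i (eAux Γ j X.1)) = eAux Γ i (eAux Γ j (eAux Γ j X.1)) :=
        eAux_comm hij.symm hadj.symm (norm_eAux j X.2)
      rw [hc, eAux_invol j X.2, eAux_invol i X.2]
    · have hM : (racgMatrix Γ) i j = 0 := by
        show (racgMatrix Γ).M i j = 0
        simp [racgMatrix, hij, hadj]
      rw [hM, pow_zero]

/-- The action of `W(Γ)` on normal forms. -/
def phiAct : RACG Γ →* Equiv.Perm (NFt Γ) :=
  (racgCS Γ).lift ⟨fun i => Emap Γ i, Emap_liftable Γ⟩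

lemma phiAct_simple (i : S) : phiAct Γ ((racgCS Γ).simple i) = Emap Γ i :=
  (racgCS Γ).lift_apply_simple (Emap_liftable Γ) i

lemma Pr_phiAct (w : RACG Γ) : ∀ X : NFt Γ, Pr ((phiAct Γ w⁻¹) X).1 = Pr X.1 * w := by
  induction w using (racgCS Γ).simple_induction_left with
  | one => intro X; simp
  | mul_simple_left w i ih =>
      intro X
      rw [mul_inv_rev, (racgCS Γ).inv_simple, map_mul, Equiv.Perm.mul_apply,
        phiAct_simple]
      have : (Emap Γ i X).1 = eAux Γ i X.1 := rfl
      rw [ih (Emap Γ i X), this, Pr_eAux i X.2, mul_assoc]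

variable {Γ}

lemma eAux_singleton {x : S} {R : List (Finset S)} (hN : Norm Γ ({x} :: R)) :
    eAux Γ x R = {x} :: R := by
  rcases R with _ | ⟨ρ, R'⟩
  · exact eAux_nil x
  · rcases norm_cons_iff.1 hN with ⟨_, hhd, htl⟩
    have hρK : Γ.IsClique (ρ : Set S) := ((norm_cons_iff.1 htl).1).2
    obtain ⟨h1, h2⟩ := not_mem_of_rel hρK (Finset.mem_singleton_self x)
      (hhd ρ (by simp))
    exact eAux_blocked _ h1 h2

lemma eAux_build {x : S} {σ : Finset S} {R : List (Finset S)} (hx : x ∉ σ) (hσ : σ ≠ ∅)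
    (hN : Norm Γ (insert x σ :: R)) :
    eAux Γ x (σ :: R) = insert x σ :: R := by
  rcases norm_cons_iff.1 hN with ⟨⟨_, hK⟩, hhd, htl⟩
  rcases R with _ | ⟨ρ, R'⟩
  · exact eAux_pass_nil hx hK
  · have hρK : Γ.IsClique (ρ : Set S) := ((norm_cons_iff.1 htl).1).2
    obtain ⟨h1, h2⟩ := not_mem_of_rel hρK (Finset.mem_insert_self x σ) (hhd ρ (by simp))
    exact eAux_pass_stop _ hx hK (by tauto)

lemma norm_drop_insert {x : S} {σ : Finset S} {R : List (Finset S)} (hσ : σ ≠ ∅)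
    (hN : Norm Γ (insert x σ :: R)) : Norm Γ (σ :: R) := by
  rcases norm_cons_iff.1 hN with ⟨⟨_, hK⟩, hhd, htl⟩
  refine norm_cons_iff.2 ⟨⟨hσ, hK.subset (by exact_mod_cast Finset.subset_insert x σ)⟩,
    ?_, htl⟩
  intro b hb y hy
  exact hhd b hb y (Finset.mem_insert_of_mem hy)

variable (Γ)

lemma phiAct_word_builds : ∀ (l : List S), l ≠ [] → l.Nodup →
    ∀ {R : List (Finset S)}, Norm Γ (l.toFinset :: R) → ∀ (hN' : Norm Γ R),
    ((phiAct Γ ((racgCS Γ).wordProd l)) ⟨R, hN'⟩).1 = l.toFinset :: R := by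
  intro l
  induction l with
  | nil => simp
  | cons x l' ih =>
      intro _ hnd R hN hN'
      rcases List.eq_nil_or_concat l' with rfl | _
      · rw [CoxeterSystem.wordProd_cons, CoxeterSystem.wordProd_nil, mul_one,
          phiAct_simple]
        show eAux Γ x R = (x :: ([] : List S)).toFinset :: R
        have htf : (x :: ([] : List S)).toFinset = {x} := by simp
        rw [htf]
        rw [htf] at hN
        exact eAux_singleton hN
      · have hl' : l' ≠ [] := by rintro rfl; simp_all
        have htf : (x :: l').toFinset = insert x l'.toFinset := List.toFinset_cons
        rw [htf] at hN
        have hx : x ∉ l'.toFinset := by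
          rw [List.mem_toFinset]
          exact (List.nodup_cons.1 hnd).1
        have hσne : l'.toFinset ≠ ∅ := by
          simp [List.toFinset_eq_empty_iff, hl']
        have hN2 : Norm Γ (l'.toFinset :: R) := norm_drop_insert hσne hN
        rw [CoxeterSystem.wordProd_cons, map_mul, Equiv.Perm.mul_apply, phiAct_simple]
        have hval : ((phiAct Γ ((racgCS Γ).wordProd l')) ⟨R, hN'⟩).1 = l'.toFinset :: R :=
          ih hl' (List.nodup_cons.1 hnd).2 hN2 hN'
        show eAux Γ x ((phiAct Γ ((racgCS Γ).wordProd l')) ⟨R, hN'⟩).1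
          = (x :: l').toFinset :: R
        rw [hval, htf]
        exact eAux_build hx hσne hN

/-- The canonical normal form of a group element. -/
def nfm (w : RACG Γ) : NFt Γ := (phiAct Γ w⁻¹) ⟨[], norm_nil Γ⟩

lemma Pr_nfm (w : RACG Γ) : Pr (nfm Γ w).1 = w := by
  unfold nfm
  rw [Pr_phiAct Γ w ⟨[], norm_nil Γ⟩]
  show Pr (Γ := Γ) [] * w = w
  rw [Pr_nil, one_mul]

lemma nfm_Pr {R : List (Finset S)} (hN : Norm Γ R) : nfm Γ (Pr (Γ := Γ) R) = ⟨R, hN⟩ := by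
  induction R with
  | nil =>
      apply Subtype.ext
      show ((phiAct Γ (Pr (Γ := Γ) ([] : List (Finset S)))⁻¹) ⟨[], norm_nil Γ⟩).1
        = ([] : List (Finset S))
      rw [Pr_nil, inv_one, map_one]
      rfl
  | cons τ R ih =>
      rcases norm_cons_iff.1 hN with ⟨⟨hτne, hτK⟩, hhd, htl⟩
      apply Subtype.ext
      show ((phiAct Γ (Pr (Γ := Γ) (τ :: R))⁻¹) ⟨[], norm_nil Γ⟩).1 = τ :: R
      rw [Pr_cons, mul_inv_rev, map_mul, Equiv.Perm.mul_apply]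
      have hIH : ((phiAct Γ (Pr (Γ := Γ) R)⁻¹) ⟨[], norm_nil Γ⟩) = ⟨R, htl⟩ := ih htl
      rw [hIH, cliqueProd_inv hτK]
      have hword : cliqueProd Γ τ = (racgCS Γ).wordProd τ.toList := rfl
      have hne : τ.toList ≠ [] := by
        simp [Finset.toList_eq_nil]
        exact hτne
      have hN2 : Norm Γ (τ.toList.toFinset :: R) := by
        rw [Finset.toList_toFinset]
        exact hN
      have := phiAct_word_builds Γ τ.toList hne (Finset.nodup_toList τ) hN2 htl
      rw [Finset.toList_toFinset] at this
      rw [hword]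
      exact this

/-- Uniqueness: two normal lists with the same product coincide. -/
lemma norm_unique {R₁ R₂ : List (Finset S)} (h₁ : Norm Γ R₁) (h₂ : Norm Γ R₂)
    (h : Pr (Γ := Γ) R₁ = Pr (Γ := Γ) R₂) : R₁ = R₂ := by
  have e₁ := nfm_Pr Γ h₁
  have e₂ := nfm_Pr Γ h₂
  rw [h, e₂] at e₁
  exact (congrArg Subtype.val e₁).symm

lemma length_prod_le (L : List (Finset S)) :
    (racgCS Γ).length (L.map (cliqueProd Γ)).prod ≤ (L.map Finset.card).sum := by
  induction L with
  | nil => simp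
  | cons τ L ih =>
      simp only [List.map_cons, List.prod_cons, List.sum_cons]
      calc (racgCS Γ).length (cliqueProd Γ τ * (L.map (cliqueProd Γ)).prod)
          ≤ (racgCS Γ).length (cliqueProd Γ τ)
            + (racgCS Γ).length (L.map (cliqueProd Γ)).prod :=
            (racgCS Γ).length_mul_le _ _
        _ ≤ τ.card + (L.map Finset.card).sum := by
            refine Nat.add_le_add ?_ ih
            have : cliqueProd Γ τ = (racgCS Γ).wordProd τ.toList := rfl
            rw [this]
            calc (racgCS Γ).length ((racgCS Γ).wordProd τ.toList)
                ≤ τ.toList.length := (racgCS Γ).length_wordProd_le _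
              _ = τ.card := Finset.length_toList τ

lemma sumcard_phiAct_le (ω : List S) : ∀ X : NFt Γ,
    (((phiAct Γ ((racgCS Γ).wordProd ω)⁻¹) X).1.map Finset.card).sum
      ≤ (X.1.map Finset.card).sum + ω.length := by
  induction ω with
  | nil => intro X; simp
  | cons i ω ih =>
      intro X
      rw [CoxeterSystem.wordProd_cons, mul_inv_rev, (racgCS Γ).inv_simple, map_mul,
        Equiv.Perm.mul_apply, phiAct_simple]
      calc (((phiAct Γ ((racgCS Γ).wordProd ω)⁻¹) ((Emap Γ i) X)).1.map Finset.card).sum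
          ≤ (((Emap Γ i) X).1.map Finset.card).sum + ω.length := ih ((Emap Γ i) X)
        _ ≤ (X.1.map Finset.card).sum + 1 + ω.length := by
            have : ((Emap Γ i) X).1 = eAux Γ i X.1 := rfl
            rw [this]
            rcases sumcard_eAux i X.2 with h | h <;> omega
        _ = (X.1.map Finset.card).sum + (i :: ω).length := by simp; omega

lemma length_eq_sumcard (w : RACG Γ) :
    (racgCS Γ).length w = ((nfm Γ w).1.map Finset.card).sum := by
  apply le_antisymm
  · have hsum : ((nfm Γ w).1.map Finset.card).sum
        = ((nfm Γ w).1.reverse.map Finset.card).sum := by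
      rw [List.map_reverse, List.sum_reverse]
    have hw : w = ((((nfm Γ w).1.reverse).map (cliqueProd Γ)).prod) := (Pr_nfm Γ w).symm
    rw [hsum]
    calc (racgCS Γ).length w
        = (racgCS Γ).length ((((nfm Γ w).1.reverse).map (cliqueProd Γ)).prod) := by rw [← hw]
      _ ≤ (((nfm Γ w).1.reverse).map Finset.card).sum := length_prod_le Γ _
  · obtain ⟨ω, hlen, hw⟩ := (racgCS Γ).exists_reduced_word w
    have h := sumcard_phiAct_le Γ ω ⟨[], norm_nil Γ⟩
    rw [← hw] at h
    unfold nfm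
    simpa [hw, hlen.eq] using h

end Group

/-- **Unique normal (clique) factorization in right-angled Coxeter groups.** Every
`w ∈ W(Γ)` has a unique factorization `w = g(σ₁)⋯g(σ_k)` into nonempty cliques such that
for consecutive cliques, no vertex `s ∈ σ_{i+1}` has `σ_i ∪ {s}` a clique; moreover
`ℓ(w) = |σ₁| + ⋯ + |σ_k|` for this factorization. -/
theorem racg_unique_clique_factorization {S : Type*} [Fintype S] [DecidableEq S]
    (Γ : SimpleGraph S) (w : RACG Γ) :
    (∃! L : List (Finset S),
      (∀ σ ∈ L, σ ≠ ∅ ∧ Γ.IsClique (σ : Set S)) ∧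
      List.Chain' (fun σ τ => ∀ s ∈ τ, ¬ Γ.IsClique ((insert s σ : Finset S) : Set S)) L ∧
      (L.map (cliqueProd Γ)).prod = w) ∧
    (∀ L : List (Finset S),
      (∀ σ ∈ L, σ ≠ ∅ ∧ Γ.IsClique (σ : Set S)) →
      List.Chain' (fun σ τ => ∀ s ∈ τ, ¬ Γ.IsClique ((insert s σ : Finset S) : Set S)) L →
      (L.map (cliqueProd Γ)).prod = w →
      (racgCS Γ).length w = (L.map Finset.card).sum) := by
  have hNR : RacgNF.Norm Γ (nfm Γ w).1 := (nfm Γ w).2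
  set R : List (Finset S) := (nfm Γ w).1 with hR
  set L : List (Finset S) := R.reverse with hL
  have memL : ∀ σ ∈ L, σ ≠ ∅ ∧ Γ.IsClique (σ : Set S) := fun σ hσ =>
    hNR.1 σ (List.mem_reverse.1 hσ)
  have chainL : List.Chain'
      (fun σ τ => ∀ s ∈ τ, ¬ Γ.IsClique ((insert s σ : Finset S) : Set S)) L := by
    have hc : List.Chain' (flip (RacgNF.Rel Γ)) L := by
      show List.IsChain (fun a b => RacgNF.Rel Γ b a) L
      rw [← List.isChain_reverse, hL, List.reverse_reverse]
      exact hNR.2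
    exact hc.imp (fun a b h => h)
  have prodL : (L.map (cliqueProd Γ)).prod = w := by
    have h := Pr_nfm Γ w
    exact h
  have huniq : ∀ L' : List (Finset S),
      (∀ σ ∈ L', σ ≠ ∅ ∧ Γ.IsClique (σ : Set S)) →
      List.Chain' (fun σ τ => ∀ s ∈ τ, ¬ Γ.IsClique ((insert s σ : Finset S) : Set S)) L' →
      (L'.map (cliqueProd Γ)).prod = w → L' = L := by
    intro L' hmem' hchain' hprod'
    have hN' : RacgNF.Norm Γ L'.reverse := by
      constructor
      · intro σ hσ
        exact hmem' σ (List.mem_reverse.1 hσ)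
      · show List.IsChain (RacgNF.Rel Γ) L'.reverse
        rw [List.isChain_reverse]
        exact hchain'.imp (fun a b h => h)
    have hPr : Pr (Γ := Γ) L'.reverse = w := by
      show ((L'.reverse.reverse).map (cliqueProd Γ)).prod = w
      rw [List.reverse_reverse]
      exact hprod'
    have hPrR : Pr (Γ := Γ) R = w := Pr_nfm Γ w
    have hrev : L'.reverse = R := norm_unique Γ hN' hNR (by rw [hPr, hPrR])
    rw [hL, ← hrev, List.reverse_reverse]
  constructor
  · exact ⟨L, ⟨memL, chainL, prodL⟩, fun L' h' => huniq L' h'.1 h'.2.1 h'.2.2⟩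
  · intro L' h1 h2 h3
    have hLL : L' = L := huniq L' h1 h2 h3
    rw [hLL]
    have : ((L.map Finset.card).sum) = ((R.map Finset.card).sum) := by
      rw [hL, List.map_reverse, List.sum_reverse]
    rw [this]
    exact length_eq_sumcard Γ w
end
end
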